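/- arXiv:2112.01791 — 6 statements merged into one kernel-verified Lean document; each statement's English description precedes it below -/
import Mathlib

section
/- Let $p > 1$, $m, \beta \in \mathbb{R}$ with $\frac{m+1}{p} < 1 - \beta$, and let $f \in L^p((0,\infty); y^m\,dy)$. Define $(H_1 f)(y) = y^{\beta-1} \int_0^y f(s) s^{-\beta}\,ds$. Then $\|H_1 f\|_{L^p((0,\infty); y^m dy)} \le C \|f\|_{L^p((0,\infty); y^m dy)}$ with $C = \left|\frac{m+1}{p} - (1-\beta)\right|^{-1}$. -/
open MeasureTheory Filter
open scoped ENNReal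

/-- The weighted measure `y^m dy` on `(0,∞)`. -/
noncomputable def wm (m : ℝ) : Measure ℝ :=
  (volume.restrict (Set.Ioi 0)).withDensity fun y => ENNReal.ofReal (y ^ m)

private lemma meas_ofReal_rpow (t : ℝ) :
    Measurable fun y : ℝ => ENNReal.ofReal (y ^ t) :=
  (measurable_id.pow_const t).ennreal_ofReal

private lemma lint_Ioo_rpow {t : ℝ} (ht : -1 < t) {y : ℝ} (hy : 0 < y) :
    ∫⁻ s in Set.Ioo (0:ℝ) y, ENNReal.ofReal (s ^ t) =
      ENNReal.ofReal (y ^ (t + 1) / (t + 1)) := by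
  have ht1 : 0 < t + 1 := by linarith
  have hint : IntegrableOn (fun s : ℝ => s ^ t) (Set.Ioo 0 y) := by
    have := (intervalIntegral.intervalIntegrable_rpow' (a := 0) (b := y) ht).1
    exact this.mono_set Set.Ioo_subset_Ioc_self
  rw [← ofReal_integral_eq_lintegral_ofReal hint ?_]
  · congr 1
    rw [← integral_Ioc_eq_integral_Ioo, ← intervalIntegral.integral_of_le hy.le,
      integral_rpow (Or.inl ht), Real.zero_rpow ht1.ne', sub_zero]
  · filter_upwards [ae_restrict_mem measurableSet_Ioo] with s hs using
      Real.rpow_nonneg hs.1.le _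

private lemma lint_Ioi_rpow {t : ℝ} (ht : t < -1) {s : ℝ} (hs : 0 < s) :
    ∫⁻ y in Set.Ioi s, ENNReal.ofReal (y ^ t) =
      ENNReal.ofReal (s ^ (t + 1) / (-(t + 1))) := by
  rw [← ofReal_integral_eq_lintegral_ofReal (integrableOn_Ioi_rpow_of_lt ht hs) ?_]
  · rw [integral_Ioi_rpow_of_lt ht hs, div_neg, neg_div]
  · filter_upwards [ae_restrict_mem measurableSet_Ioi] with y hy using
      Real.rpow_nonneg (hs.trans hy).le _

private lemma hardy_key (p m β : ℝ) (hp : 1 < p) (h : (m + 1) / p < 1 - β)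
    (g : ℝ → ℝ) (hg : Measurable g) :
    ∫⁻ y in Set.Ioi (0:ℝ),
        (‖y ^ (β - 1) * ∫ s in Set.Ioo (0 : ℝ) y, g s * s ^ (-β)‖₊ : ℝ≥0∞) ^ p
          * ENNReal.ofReal (y ^ m)
      ≤ ENNReal.ofReal ((1 - β) - (m + 1) / p)⁻¹ ^ p
          * ∫⁻ s in Set.Ioi (0:ℝ), (‖g s‖₊ : ℝ≥0∞) ^ p * ENNReal.ofReal (s ^ m) := by
  have hp0 : 0 < p := by linarith
  have hpne : p ≠ 0 := hp0.ne'
  have hp1 : p - 1 ≠ 0 := sub_ne_zero.mpr hp.ne'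
  obtain ⟨r, hr_def⟩ : ∃ r : ℝ, r = (1 - β) - (m + 1) / p := ⟨_, rfl⟩
  have hr : 0 < r := by rw [hr_def]; linarith
  rw [← hr_def]
  obtain ⟨q, hq_def⟩ : ∃ q : ℝ, q = p / (p - 1) := ⟨_, rfl⟩
  have hpq : p.HolderConjugate q := by
    exact (Real.holderConjugate_iff_eq_conjExponent hp).2 hq_def
  have hq0 : q ≠ 0 := hpq.symm.ne_zero
  obtain ⟨c, hc_def⟩ : ∃ c : ℝ, c = (r - 1) / q := ⟨_, rfl⟩
  obtain ⟨a, ha_def⟩ : ∃ a : ℝ, a = -β - c := ⟨_, rfl⟩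
  have hrp : r * p = (1 - β) * p - (m + 1) := by
    rw [hr_def]; field_simp
  have hcq : c * q = r - 1 := by rw [hc_def]; field_simp
  have hcp : c * p = (r - 1) * (p - 1) := by
    rw [hc_def, hq_def]; field_simp
  have hqp : 1 / q * p = p - 1 := by rw [hq_def]; field_simp
  have hap : a * p + -r = m := by
    have h1 : a * p = -β * p - c * p := by rw [ha_def]; ring
    rw [h1, hcp]; linear_combination -hrp
  have hE : (β - 1) * p + r * (p - 1) + m = -r - 1 := by linear_combination hrp
  set K : ℝ≥0∞ := ENNReal.ofReal r⁻¹ with hK_def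
  have hKtop : K ≠ ∞ := ENNReal.ofReal_ne_top
  have hK0 : K ≠ 0 := by
    rw [hK_def, Ne, ENNReal.ofReal_eq_zero, not_le]
    positivity
  set A : ℝ → ℝ≥0∞ := fun y =>
    ∫⁻ s in Set.Ioo (0:ℝ) y, (‖g s‖₊ : ℝ≥0∞) ^ p * ENNReal.ofReal (s ^ (a * p))
    with hA_def
  -- Step 1: pointwise bound
  have step1 : ∀ y : ℝ, 0 < y →
      (‖y ^ (β - 1) * ∫ s in Set.Ioo (0 : ℝ) y, g s * s ^ (-β)‖₊ : ℝ≥0∞) ^ p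
          * ENNReal.ofReal (y ^ m)
        ≤ K ^ (p - 1) * (ENNReal.ofReal (y ^ (-r - 1)) * A y) := by
    intro y hy
    have hnorm : (‖y ^ (β - 1) * ∫ s in Set.Ioo (0 : ℝ) y, g s * s ^ (-β)‖₊ : ℝ≥0∞)
        ≤ ENNReal.ofReal (y ^ (β - 1)) *
            ∫⁻ s in Set.Ioo (0:ℝ) y, (‖g s‖₊ : ℝ≥0∞) * ENNReal.ofReal (s ^ (-β)) := by
      rw [nnnorm_mul, ENNReal.coe_mul, ← enorm_eq_nnnorm (y ^ (β - 1)),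
        Real.enorm_eq_ofReal (Real.rpow_nonneg hy.le _)]
      refine mul_le_mul_right ?_ _
      refine (enorm_integral_le_lintegral_enorm _).trans_eq ?_
      refine setLIntegral_congr_fun measurableSet_Ioo (fun s hs => ?_)
      rw [enorm_mul,
        Real.enorm_eq_ofReal (Real.rpow_nonneg hs.1.le _), enorm_eq_nnnorm]
    have hsplit : ∫⁻ s in Set.Ioo (0:ℝ) y, (‖g s‖₊ : ℝ≥0∞) * ENNReal.ofReal (s ^ (-β))
        = ∫⁻ s in Set.Ioo (0:ℝ) y,
            ((fun s => (‖g s‖₊ : ℝ≥0∞) * ENNReal.ofReal (s ^ a)) *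
              (fun s => ENNReal.ofReal (s ^ c))) s := by
      refine setLIntegral_congr_fun measurableSet_Ioo (fun s hs => ?_)
      simp only [Pi.mul_apply]
      rw [mul_assoc, ← ENNReal.ofReal_mul (Real.rpow_nonneg hs.1.le _),
        ← Real.rpow_add hs.1]
      congr 2
      rw [ha_def]; ring
    have hfp : ∫⁻ s in Set.Ioo (0:ℝ) y,
        ((‖g s‖₊ : ℝ≥0∞) * ENNReal.ofReal (s ^ a)) ^ p = A y := by
      refine setLIntegral_congr_fun measurableSet_Ioo (fun s hs => ?_)
      rw [ENNReal.mul_rpow_of_nonneg _ _ hp0.le,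
        ENNReal.ofReal_rpow_of_pos (Real.rpow_pos_of_pos hs.1 _),
        ← Real.rpow_mul hs.1.le]
    have hgq : ∫⁻ s in Set.Ioo (0:ℝ) y, (ENNReal.ofReal (s ^ c)) ^ q
        = ENNReal.ofReal (y ^ r) * K := by
      have h1 : ∫⁻ s in Set.Ioo (0:ℝ) y, (ENNReal.ofReal (s ^ c)) ^ q
          = ∫⁻ s in Set.Ioo (0:ℝ) y, ENNReal.ofReal (s ^ (r - 1)) := by
        refine setLIntegral_congr_fun measurableSet_Ioo (fun s hs => ?_)
        rw [ENNReal.ofReal_rpow_of_pos (Real.rpow_pos_of_pos hs.1 _),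
          ← Real.rpow_mul hs.1.le, hcq]
      have h2 : r - 1 + 1 = r := by ring
      rw [h1, lint_Ioo_rpow (by linarith) hy, h2, div_eq_mul_inv,
        ENNReal.ofReal_mul (Real.rpow_nonneg hy.le _)]
    have hNB : (‖y ^ (β - 1) * ∫ s in Set.Ioo (0 : ℝ) y, g s * s ^ (-β)‖₊ : ℝ≥0∞)
        ≤ ENNReal.ofReal (y ^ (β - 1)) *
            (A y ^ (1 / p) * (ENNReal.ofReal (y ^ r) * K) ^ (1 / q)) := by
      refine hnorm.trans ?_
      refine mul_le_mul_right ?_ _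
      rw [hsplit]
      refine (ENNReal.lintegral_mul_le_Lp_mul_Lq _ hpq
        (f := fun s => (‖g s‖₊ : ℝ≥0∞) * ENNReal.ofReal (s ^ a))
        ((hg.nnnorm.coe_nnreal_ennreal.mul (meas_ofReal_rpow a)).aemeasurable)
        ((meas_ofReal_rpow c).aemeasurable)).trans_eq ?_
      rw [hfp, hgq]
    have hBp : (ENNReal.ofReal (y ^ (β - 1)) *
          (A y ^ (1 / p) * (ENNReal.ofReal (y ^ r) * K) ^ (1 / q))) ^ p
          * ENNReal.ofReal (y ^ m)
        = K ^ (p - 1) * (ENNReal.ofReal (y ^ (-r - 1)) * A y) := by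
      have e1 : ENNReal.ofReal (y ^ (β - 1)) ^ p
          = ENNReal.ofReal (y ^ ((β - 1) * p)) := by
        rw [ENNReal.ofReal_rpow_of_pos (Real.rpow_pos_of_pos hy _),
          ← Real.rpow_mul hy.le]
      have e2 : (A y ^ (1 / p)) ^ p = A y := by
        rw [← ENNReal.rpow_mul, one_div, inv_mul_cancel₀ hp0.ne', ENNReal.rpow_one]
      have e3 : ((ENNReal.ofReal (y ^ r) * K) ^ (1 / q)) ^ p
          = ENNReal.ofReal (y ^ (r * (p - 1))) * K ^ (p - 1) := by
        rw [← ENNReal.rpow_mul, hqp,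
          ENNReal.mul_rpow_of_nonneg _ _ (by linarith : (0:ℝ) ≤ p - 1),
          ENNReal.ofReal_rpow_of_pos (Real.rpow_pos_of_pos hy _),
          ← Real.rpow_mul hy.le]
      have e4 : ENNReal.ofReal (y ^ ((β - 1) * p)) * ENNReal.ofReal (y ^ (r * (p - 1)))
            * ENNReal.ofReal (y ^ m) = ENNReal.ofReal (y ^ (-r - 1)) := by
        have hyE : y ^ ((β - 1) * p) * y ^ (r * (p - 1)) * y ^ m = y ^ (-r - 1) := by
          rw [← Real.rpow_add hy, ← Real.rpow_add hy, hE]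
        rw [← ENNReal.ofReal_mul (Real.rpow_nonneg hy.le _),
          ← ENNReal.ofReal_mul (mul_nonneg (Real.rpow_nonneg hy.le _) (Real.rpow_nonneg hy.le _)),
          hyE]
      rw [ENNReal.mul_rpow_of_nonneg _ _ hp0.le, ENNReal.mul_rpow_of_nonneg _ _ hp0.le,
        e1, e2, e3]
      trans (ENNReal.ofReal (y ^ ((β - 1) * p)) * ENNReal.ofReal (y ^ (r * (p - 1)))
          * ENNReal.ofReal (y ^ m)) * (K ^ (p - 1) * A y)
      · ring
      · rw [e4]; ring
    calc (‖y ^ (β - 1) * ∫ s in Set.Ioo (0 : ℝ) y, g s * s ^ (-β)‖₊ : ℝ≥0∞) ^ p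
          * ENNReal.ofReal (y ^ m)
        ≤ (ENNReal.ofReal (y ^ (β - 1)) *
            (A y ^ (1 / p) * (ENNReal.ofReal (y ^ r) * K) ^ (1 / q))) ^ p
            * ENNReal.ofReal (y ^ m) :=
          mul_le_mul_left (ENNReal.rpow_le_rpow hNB hp0.le) _
      _ = K ^ (p - 1) * (ENNReal.ofReal (y ^ (-r - 1)) * A y) := hBp
  -- Step 2: Tonelli
  have hhfin : ∀ s : ℝ, (‖g s‖₊ : ℝ≥0∞) ^ p * ENNReal.ofReal (s ^ (a * p)) ≠ ∞ :=
    fun s => ENNReal.mul_ne_top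
      (ENNReal.rpow_ne_top_of_nonneg hp0.le ENNReal.coe_ne_top) ENNReal.ofReal_ne_top
  have step2 : ∫⁻ y in Set.Ioi (0:ℝ), ENNReal.ofReal (y ^ (-r - 1)) * A y
      = ∫⁻ s in Set.Ioi (0:ℝ), ((‖g s‖₊ : ℝ≥0∞) ^ p * ENNReal.ofReal (s ^ (a * p)))
          * ∫⁻ y in Set.Ioi s, ENNReal.ofReal (y ^ (-r - 1)) := by
    set F : ℝ → ℝ → ℝ≥0∞ := fun y s =>
      Set.indicator (Set.Ioo 0 y)
        (fun s => ENNReal.ofReal (y ^ (-r - 1)) *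
          ((‖g s‖₊ : ℝ≥0∞) ^ p * ENNReal.ofReal (s ^ (a * p)))) s with hF_def
    have hFmeas : AEMeasurable (Function.uncurry F)
        ((volume.restrict (Set.Ioi (0:ℝ))).prod (volume.restrict (Set.Ioi (0:ℝ)))) := by
      apply Measurable.aemeasurable
      have hset : MeasurableSet {z : ℝ × ℝ | 0 < z.2 ∧ z.2 < z.1} := by
        exact (measurableSet_lt measurable_const measurable_snd).inter
          (measurableSet_lt measurable_snd measurable_fst)
      have heq : Function.uncurry F = Set.indicator {z : ℝ × ℝ | 0 < z.2 ∧ z.2 < z.1}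
          (fun z => ENNReal.ofReal (z.1 ^ (-r - 1)) *
            ((‖g z.2‖₊ : ℝ≥0∞) ^ p * ENNReal.ofReal (z.2 ^ (a * p)))) := by
        funext z
        rcases z with ⟨y, s⟩
        simp only [Function.uncurry, hF_def, Set.indicator, Set.mem_Ioo, Set.mem_setOf_eq]
      rw [heq]
      refine Measurable.indicator ?_ hset
      exact ((measurable_fst.pow_const (-r - 1)).ennreal_ofReal).mul
        ((((hg.comp measurable_snd).nnnorm.coe_nnreal_ennreal).pow_const _).mul
          ((measurable_snd.pow_const (a * p)).ennreal_ofReal))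
    have hL : ∀ y : ℝ, ∫⁻ s in Set.Ioi (0:ℝ), F y s
        = ENNReal.ofReal (y ^ (-r - 1)) * A y := by
      intro y
      simp only [hF_def]
      rw [lintegral_indicator measurableSet_Ioo, Measure.restrict_restrict measurableSet_Ioo,
        Set.inter_eq_self_of_subset_left Set.Ioo_subset_Ioi_self,
        lintegral_const_mul' _ _ ENNReal.ofReal_ne_top]
    have hR : ∀ᵐ s ∂(volume.restrict (Set.Ioi (0:ℝ))),
        ∫⁻ y in Set.Ioi (0:ℝ), F y s
          = ((‖g s‖₊ : ℝ≥0∞) ^ p * ENNReal.ofReal (s ^ (a * p)))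
              * ∫⁻ y in Set.Ioi s, ENNReal.ofReal (y ^ (-r - 1)) := by
      filter_upwards [ae_restrict_mem measurableSet_Ioi] with s hs
      have hFy : ∀ y : ℝ, F y s = Set.indicator (Set.Ioi s)
          (fun y => ENNReal.ofReal (y ^ (-r - 1)) *
            ((‖g s‖₊ : ℝ≥0∞) ^ p * ENNReal.ofReal (s ^ (a * p)))) y := by
        intro y
        by_cases hys : s < y
        · simp only [hF_def]
          rw [Set.indicator_of_mem (Set.mem_Ioo.mpr ⟨hs, hys⟩),
            Set.indicator_of_mem (Set.mem_Ioi.mpr hys)]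
        · simp only [hF_def]
          rw [Set.indicator_of_notMem (fun hmem => hys (Set.mem_Ioo.mp hmem).2),
            Set.indicator_of_notMem (by simpa using hys)]
      simp_rw [hFy]
      rw [lintegral_indicator measurableSet_Ioi, Measure.restrict_restrict measurableSet_Ioi,
        Set.inter_eq_self_of_subset_left (Set.Ioi_subset_Ioi hs.le),
        lintegral_mul_const' _ _ (hhfin s), mul_comm]
    calc ∫⁻ y in Set.Ioi (0:ℝ), ENNReal.ofReal (y ^ (-r - 1)) * A y
        = ∫⁻ y in Set.Ioi (0:ℝ), ∫⁻ s in Set.Ioi (0:ℝ), F y s := by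
          refine lintegral_congr fun y => (hL y).symm
      _ = ∫⁻ s in Set.Ioi (0:ℝ), ∫⁻ y in Set.Ioi (0:ℝ), F y s :=
          lintegral_lintegral_swap hFmeas
      _ = _ := lintegral_congr_ae hR
  -- Step 3: compute the outer integral and conclude
  have hIoi : ∀ s : ℝ, 0 < s →
      ∫⁻ y in Set.Ioi s, ENNReal.ofReal (y ^ (-r - 1))
        = ENNReal.ofReal (s ^ (-r)) * K := by
    intro s hs
    have h1 : -r - 1 + 1 = -r := by ring
    rw [lint_Ioi_rpow (by linarith) hs, h1, neg_neg, div_eq_mul_inv,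
      ENNReal.ofReal_mul (Real.rpow_nonneg hs.le _)]
  have hKp : K ^ (p - 1) * K = K ^ p := by
    calc K ^ (p - 1) * K = K ^ (p - 1) * K ^ (1:ℝ) := by rw [ENNReal.rpow_one]
      _ = K ^ (p - 1 + 1) := (ENNReal.rpow_add _ _ hK0 hKtop).symm
      _ = K ^ p := by norm_num
  calc ∫⁻ y in Set.Ioi (0:ℝ),
        (‖y ^ (β - 1) * ∫ s in Set.Ioo (0 : ℝ) y, g s * s ^ (-β)‖₊ : ℝ≥0∞) ^ p
          * ENNReal.ofReal (y ^ m)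
      ≤ ∫⁻ y in Set.Ioi (0:ℝ), K ^ (p - 1) * (ENNReal.ofReal (y ^ (-r - 1)) * A y) := by
        refine lintegral_mono_ae ?_
        filter_upwards [ae_restrict_mem measurableSet_Ioi] with y hy using step1 y hy
    _ = K ^ (p - 1) * ∫⁻ y in Set.Ioi (0:ℝ), ENNReal.ofReal (y ^ (-r - 1)) * A y :=
        lintegral_const_mul' _ _
          (ENNReal.rpow_ne_top_of_nonneg (by linarith) hKtop)
    _ = K ^ (p - 1) * ∫⁻ s in Set.Ioi (0:ℝ),
          ((‖g s‖₊ : ℝ≥0∞) ^ p * ENNReal.ofReal (s ^ (a * p)))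
            * ∫⁻ y in Set.Ioi s, ENNReal.ofReal (y ^ (-r - 1)) := by rw [step2]
    _ = K ^ (p - 1) * (K * ∫⁻ s in Set.Ioi (0:ℝ),
          (‖g s‖₊ : ℝ≥0∞) ^ p * ENNReal.ofReal (s ^ m)) := by
        congr 1
        rw [← lintegral_const_mul' K _ hKtop]
        refine setLIntegral_congr_fun measurableSet_Ioi (fun s hs => ?_)
        rw [hIoi s hs]
        have hmul : ENNReal.ofReal (s ^ (a * p)) * ENNReal.ofReal (s ^ (-r))
            = ENNReal.ofReal (s ^ m) := by
          rw [← ENNReal.ofReal_mul (Real.rpow_nonneg hs.le _), ← Real.rpow_add hs]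
          congr 1
          exact congrArg (s ^ ·) hap
        trans ((‖g s‖₊ : ℝ≥0∞) ^ p *
          (ENNReal.ofReal (s ^ (a * p)) * ENNReal.ofReal (s ^ (-r)))) * K
        · ring
        · rw [hmul]; ring
    _ = ENNReal.ofReal r⁻¹ ^ p * ∫⁻ s in Set.Ioi (0:ℝ),
          (‖g s‖₊ : ℝ≥0∞) ^ p * ENNReal.ofReal (s ^ m) := by
        rw [← mul_assoc, hKp, hK_def]

/-- Weighted Hardy inequality for `(H₁ f)(y) = y^{β-1} ∫_0^y f(s) s^{-β} ds`
when `(m+1)/p < 1-β`. -/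
theorem stmt4 (p m β : ℝ) (hp : 1 < p) (h : (m + 1) / p < 1 - β)
    (f : ℝ → ℝ) (hf : MemLp f (ENNReal.ofReal p) (wm m)) :
    eLpNorm (fun y => y ^ (β - 1) * ∫ s in Set.Ioo (0 : ℝ) y, f s * s ^ (-β))
        (ENNReal.ofReal p) (wm m) ≤
      ENNReal.ofReal |(m + 1) / p - (1 - β)|⁻¹ * eLpNorm f (ENNReal.ofReal p) (wm m) := by
  have hp0 : 0 < p := by linarith
  have hp'0 : ENNReal.ofReal p ≠ 0 := by
    rw [Ne, ENNReal.ofReal_eq_zero, not_le]; exact hp0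
  have hp't : ENNReal.ofReal p ≠ ∞ := ENNReal.ofReal_ne_top
  have hwmeas : Measurable fun y : ℝ => ENNReal.ofReal (y ^ m) := meas_ofReal_rpow m
  set g : ℝ → ℝ := hf.1.mk f with hg_def
  have hgm : Measurable g := hf.1.stronglyMeasurable_mk.measurable
  have hfg0 : f =ᵐ[wm m] g := hf.1.ae_eq_mk
  have hfg : f =ᵐ[volume.restrict (Set.Ioi (0:ℝ))] g := by
    have h1 : ∀ᵐ y ∂(volume.restrict (Set.Ioi (0:ℝ))),
        ENNReal.ofReal (y ^ m) ≠ 0 → f y = g y := by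
      rw [← ae_withDensity_iff hwmeas]
      exact hfg0
    filter_upwards [h1, ae_restrict_mem measurableSet_Ioi] with y h1y hy
    refine h1y ?_
    rw [Ne, ENNReal.ofReal_eq_zero, not_le]
    exact Real.rpow_pos_of_pos hy _
  have hLfun : ∀ y : ℝ, (∫ s in Set.Ioo (0:ℝ) y, f s * s ^ (-β))
      = ∫ s in Set.Ioo (0:ℝ) y, g s * s ^ (-β) := by
    intro y
    refine integral_congr_ae ?_
    filter_upwards [ae_restrict_of_ae_restrict_of_subset Set.Ioo_subset_Ioi_self hfg]
      with s hs
    rw [hs]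
  rw [eLpNorm_eq_lintegral_rpow_enorm_toReal hp'0 hp't, eLpNorm_eq_lintegral_rpow_enorm_toReal hp'0 hp't,
    ENNReal.toReal_ofReal hp0.le]
  simp only [wm, enorm_eq_nnnorm]
  rw [lintegral_withDensity_eq_lintegral_mul_non_measurable _ hwmeas
      (ae_of_all _ fun y => ENNReal.ofReal_lt_top),
    lintegral_withDensity_eq_lintegral_mul_non_measurable _ hwmeas
      (ae_of_all _ fun y => ENNReal.ofReal_lt_top)]
  simp only [Pi.mul_apply]
  have hL : ∫⁻ y in Set.Ioi (0:ℝ), ENNReal.ofReal (y ^ m) *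
        (‖y ^ (β - 1) * ∫ s in Set.Ioo (0:ℝ) y, f s * s ^ (-β)‖₊ : ℝ≥0∞) ^ p
      = ∫⁻ y in Set.Ioi (0:ℝ),
          (‖y ^ (β - 1) * ∫ s in Set.Ioo (0:ℝ) y, g s * s ^ (-β)‖₊ : ℝ≥0∞) ^ p
            * ENNReal.ofReal (y ^ m) := by
    refine lintegral_congr fun y => ?_
    rw [hLfun y, mul_comm]
  have hR : ∫⁻ s in Set.Ioi (0:ℝ), ENNReal.ofReal (s ^ m) * (‖f s‖₊ : ℝ≥0∞) ^ p
      = ∫⁻ s in Set.Ioi (0:ℝ), (‖g s‖₊ : ℝ≥0∞) ^ p * ENNReal.ofReal (s ^ m) := by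
    refine lintegral_congr_ae ?_
    filter_upwards [hfg] with s hs
    rw [hs, mul_comm]
  rw [hL, hR]
  have key := hardy_key p m β hp h g hgm
  have habs : |(m + 1) / p - (1 - β)|⁻¹ = ((1 - β) - (m + 1) / p)⁻¹ := by
    rw [abs_of_neg (by linarith), neg_sub]
  rw [habs]
  calc (∫⁻ y in Set.Ioi (0:ℝ),
        (‖y ^ (β - 1) * ∫ s in Set.Ioo (0:ℝ) y, g s * s ^ (-β)‖₊ : ℝ≥0∞) ^ p
          * ENNReal.ofReal (y ^ m)) ^ (1 / p)
      ≤ (ENNReal.ofReal ((1 - β) - (m + 1) / p)⁻¹ ^ p *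
          ∫⁻ s in Set.Ioi (0:ℝ), (‖g s‖₊ : ℝ≥0∞) ^ p * ENNReal.ofReal (s ^ m)) ^ (1 / p) :=
        ENNReal.rpow_le_rpow key (by positivity)
    _ = ENNReal.ofReal ((1 - β) - (m + 1) / p)⁻¹ *
          (∫⁻ s in Set.Ioi (0:ℝ), (‖g s‖₊ : ℝ≥0∞) ^ p * ENNReal.ofReal (s ^ m)) ^ (1 / p) := by
        rw [ENNReal.mul_rpow_of_nonneg _ _ (by positivity), ← ENNReal.rpow_mul,
          mul_one_div, div_self hp0.ne', ENNReal.rpow_one]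
end

section
/- Let $p > 1$, $m, \beta \in \mathbb{R}$ with $\frac{m+1}{p} > 1 - \beta$, and let $f \in L^p((0,\infty); y^m\,dy)$. Define $(H_2 f)(y) = y^{\beta-1} \int_y^\infty f(s) s^{-\beta}\,ds$. Then $\|H_2 f\|_{L^p((0,\infty); y^m dy)} \le C \|f\|_{L^p((0,\infty); y^m dy)}$ with $C = \left|\frac{m+1}{p} - (1-\beta)\right|^{-1}$. -/
open MeasureTheory Filter
open scoped ENNReal

open MeasureTheory Filter Set
open scoped ENNReal

theorem lint_Ioo (w s : ℝ) (hw : -1 < w) (hs : 0 < s) :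
    ∫⁻ y in Set.Ioo (0:ℝ) s, ENNReal.ofReal (y ^ w) = ENNReal.ofReal (s ^ (w+1) / (w+1)) := by
  have hi : IntegrableOn (fun y : ℝ => y ^ w) (Set.Ioo 0 s) :=
    ((intervalIntegral.intervalIntegrable_rpow' hw).1).mono_set Set.Ioo_subset_Ioc_self
  rw [← ofReal_integral_eq_lintegral_ofReal hi ((ae_restrict_iff' measurableSet_Ioo).2
    (ae_of_all _ fun y hy => Real.rpow_nonneg hy.1.le _))]
  congr 1
  rw [← MeasureTheory.integral_Ioc_eq_integral_Ioo, ← intervalIntegral.integral_of_le hs.le,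
    integral_rpow (Or.inl hw), Real.zero_rpow (by linarith), sub_zero]

theorem swap_aux (w : ℝ) (hw : -1 < w) (K : ℝ → ℝ≥0∞) (hK : Measurable K) :
    ∫⁻ y in Set.Ioi (0:ℝ), ENNReal.ofReal (y ^ w) * ∫⁻ s in Set.Ioi y, K s
      = ∫⁻ s in Set.Ioi (0:ℝ), K s * ENNReal.ofReal (s ^ (w+1) / (w+1)) := by
  set F : ℝ → ℝ → ℝ≥0∞ := fun y s => if y < s then ENNReal.ofReal (y ^ w) * K s else 0 with hF
  have hFmeas : Measurable (Function.uncurry F) := by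
    refine Measurable.ite (measurableSet_lt measurable_fst measurable_snd) ?_ measurable_const
    exact ((measurable_fst.pow_const w).ennreal_ofReal).mul (hK.comp measurable_snd)
  calc ∫⁻ y in Set.Ioi (0:ℝ), ENNReal.ofReal (y ^ w) * ∫⁻ s in Set.Ioi y, K s
      = ∫⁻ y in Set.Ioi (0:ℝ), ∫⁻ s, F y s := by
        refine lintegral_congr fun y => ?_
        rw [← lintegral_const_mul' _ _ ENNReal.ofReal_ne_top,
          ← lintegral_indicator measurableSet_Ioi]
        refine lintegral_congr fun s => ?_
        simp [hF, Set.indicator_apply, Set.mem_Ioi]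
    _ = ∫⁻ s, ∫⁻ y in Set.Ioi (0:ℝ), F y s := lintegral_lintegral_swap hFmeas.aemeasurable
    _ = ∫⁻ s, (Set.Ioi (0:ℝ)).indicator (fun s => K s * ENNReal.ofReal (s ^ (w+1) / (w+1))) s := by
        refine lintegral_congr fun s => ?_
        by_cases hs : 0 < s
        · rw [Set.indicator_of_mem (Set.mem_Ioi.2 hs)]
          calc ∫⁻ y in Set.Ioi (0:ℝ), F y s
              = ∫⁻ y in Set.Ioi (0:ℝ),
                  (Set.Iio s).indicator (fun y => ENNReal.ofReal (y ^ w)) y * K s := by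
                refine lintegral_congr fun y => ?_
                by_cases hys : y < s <;>
                  simp [hF, Set.indicator_apply, Set.mem_Iio, hys, mul_comm]
            _ = (∫⁻ y in Set.Ioi (0:ℝ), (Set.Iio s).indicator (fun y => ENNReal.ofReal (y ^ w)) y)
                  * K s := lintegral_mul_const _ ((measurable_id'.pow_const w).ennreal_ofReal.indicator measurableSet_Iio)
            _ = (∫⁻ y in Set.Ioo (0:ℝ) s, ENNReal.ofReal (y ^ w)) * K s := by
                rw [lintegral_indicator measurableSet_Iio, Measure.restrict_restrict measurableSet_Iio,
                  Set.Iio_inter_Ioi]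
            _ = K s * ENNReal.ofReal (s ^ (w+1) / (w+1)) := by
                rw [lint_Ioo w s hw hs, mul_comm]
        · rw [Set.indicator_of_notMem (by simpa using hs)]
          rw [setLIntegral_congr_fun measurableSet_Ioi
            (fun y (hy : 0 < y) => show F y s = 0 from if_neg (by push_neg at hs ⊢; linarith)),
            lintegral_zero]
    _ = ∫⁻ s in Set.Ioi (0:ℝ), K s * ENNReal.ofReal (s ^ (w+1) / (w+1)) :=
        lintegral_indicator measurableSet_Ioi _

theorem lint_Ioi (c a : ℝ) (hc : 0 < c) (ha : a < -1) :
    ∫⁻ s in Set.Ioi c, ENNReal.ofReal (s ^ a) = ENNReal.ofReal (c ^ (a+1) / (-(a+1))) := by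
  rw [← ofReal_integral_eq_lintegral_ofReal (integrableOn_Ioi_rpow_of_lt ha hc)
    ((ae_restrict_iff' measurableSet_Ioi).2 (ae_of_all _ fun s hs =>
      Real.rpow_nonneg (hc.trans hs).le _)), integral_Ioi_rpow_of_lt ha hc]
  rw [div_neg, neg_div]

theorem core (p q m β α ε w : ℝ) (hp : 1 < p) (hq : q = p/(p-1))
    (hα : α = (m+1)/p - (1-β)) (hα0 : 0 < α) (hε : ε = (1+α)/q)
    (hwdef : w = (β-1)*p - α*(p-1) + m)
    (g : ℝ → ℝ≥0∞) (hg : Measurable g) :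
    ∫⁻ y in Set.Ioi (0:ℝ), ENNReal.ofReal (y^m) *
        (ENNReal.ofReal (y^(β-1)) * ∫⁻ s in Set.Ioi y, g s * ENNReal.ofReal (s^(-β)))^p
      ≤ ENNReal.ofReal α⁻¹ ^ p * ∫⁻ s in Set.Ioi (0:ℝ), ENNReal.ofReal (s^m) * (g s)^p := by
  have hp0 : (0:ℝ) < p := by linarith
  have hp1 : p - 1 ≠ 0 := (by linarith : (0:ℝ) < p - 1).ne'
  have hq0 : (0:ℝ) < q := by rw [hq]; exact div_pos hp0 (by linarith)
  have hpq : p.HolderConjugate q := (Real.holderConjugate_iff_eq_conjExponent hp).2 hq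
  have hr : p / q = p - 1 := by rw [hq]; field_simp
  have hεq : ε * q = 1 + α := by rw [hε]; field_simp
  have hεp : ε * p = (1+α)*(p-1) := by rw [hε, hq]; field_simp
  have hαp : α * p = m + 1 + β*p - p := by rw [hα]; field_simp; ring
  have he3 : (ε-β)*p + α = m := by linear_combination hεp + hαp
  have hw1 : w + 1 = α := by rw [hwdef]; linear_combination -hαp
  have hw : -1 < w := by linarith
  set r : ℝ := p / q with hrdef
  set K : ℝ → ℝ≥0∞ := fun s => (g s)^p * ENNReal.ofReal (s^((ε-β)*p)) with hK
  have hKm : Measurable K := (hg.pow_const p).mul ((measurable_id'.pow_const _).ennreal_ofReal)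
  set J : ℝ → ℝ≥0∞ := fun y => ∫⁻ s in Set.Ioi y, K s with hJ
  -- Hölder step
  have hH : ∀ y, 0 < y → (∫⁻ s in Set.Ioi y, g s * ENNReal.ofReal (s^(-β)))
      ≤ (J y)^(1/p) * ENNReal.ofReal (y^(-α)/α)^(1/q) := by
    intro y hy
    have hcongr : ∫⁻ s in Set.Ioi y, g s * ENNReal.ofReal (s^(-β))
        = ∫⁻ s in Set.Ioi y, ((fun s => g s * ENNReal.ofReal (s^(ε-β))) *
            (fun s => ENNReal.ofReal (s^(-ε)))) s := by
      refine (setLIntegral_congr_fun measurableSet_Ioi (fun s hs => ?_))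
      have hs0 : 0 < s := hy.trans hs
      simp only [Pi.mul_apply]
      rw [mul_assoc, ← ENNReal.ofReal_mul (Real.rpow_nonneg hs0.le _), ← Real.rpow_add hs0,
        show ε - β + -ε = -β by ring]
    rw [hcongr]
    refine (ENNReal.lintegral_mul_le_Lp_mul_Lq _ hpq
      ((hg.mul ((measurable_id'.pow_const _).ennreal_ofReal)).aemeasurable)
      (((measurable_id'.pow_const _).ennreal_ofReal).aemeasurable)).trans (le_of_eq ?_)
    have h1 : ∫⁻ s in Set.Ioi y, (g s * ENNReal.ofReal (s^(ε-β)))^p = J y := by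
      refine setLIntegral_congr_fun measurableSet_Ioi (fun s hs => ?_)
      have hs0 : 0 < s := hy.trans hs
      rw [ENNReal.mul_rpow_of_nonneg _ _ hp0.le,
        ENNReal.ofReal_rpow_of_nonneg (Real.rpow_nonneg hs0.le _) hp0.le,
        ← Real.rpow_mul hs0.le]
    have h2 : ∫⁻ s in Set.Ioi y, (ENNReal.ofReal (s^(-ε)))^q = ENNReal.ofReal (y^(-α)/α) := by
      have hptw : ∀ s ∈ Set.Ioi y, (ENNReal.ofReal (s^(-ε)))^q = ENNReal.ofReal (s^((-ε)*q)) := by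
        intro s hs
        have hs0 : 0 < s := hy.trans hs
        rw [ENNReal.ofReal_rpow_of_nonneg (Real.rpow_nonneg hs0.le _) hq0.le,
          ← Real.rpow_mul hs0.le]
      rw [setLIntegral_congr_fun measurableSet_Ioi hptw,
        lint_Ioi y _ hy (by rw [neg_mul, hεq]; linarith),
        show (-ε)*q + 1 = -α by rw [neg_mul, hεq]; ring, neg_neg]
    simp only [Pi.mul_apply]
    rw [h1, h2]
  -- pointwise bound
  have hpt : ∀ y ∈ Set.Ioi (0:ℝ), ENNReal.ofReal (y^m) *
      (ENNReal.ofReal (y^(β-1)) * ∫⁻ s in Set.Ioi y, g s * ENNReal.ofReal (s^(-β)))^p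
      ≤ ENNReal.ofReal (α^(-r)) * (ENNReal.ofReal (y^w) * J y) := by
    intro y hy
    rw [Set.mem_Ioi] at hy
    have hZ : ENNReal.ofReal (y^(-α)/α) ^ (1/q*p)
        = ENNReal.ofReal (α^(-r)) * ENNReal.ofReal (y^((-α)*r)) := by
      rw [ENNReal.ofReal_rpow_of_nonneg (by positivity) (by positivity),
        show 1/q*p = r by rw [hrdef]; ring,
        Real.div_rpow (Real.rpow_nonneg hy.le _) hα0.le,
        ← Real.rpow_mul hy.le, div_eq_mul_inv, ← Real.rpow_neg hα0.le,
        ENNReal.ofReal_mul (Real.rpow_nonneg hy.le _), mul_comm]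
    have hyw : ENNReal.ofReal (y^m) * (ENNReal.ofReal (y^((β-1)*p)) * ENNReal.ofReal (y^((-α)*r)))
        = ENNReal.ofReal (y^w) := by
      rw [← ENNReal.ofReal_mul (Real.rpow_nonneg hy.le _),
        ← ENNReal.ofReal_mul (Real.rpow_nonneg hy.le _),
        ← Real.rpow_add hy, ← Real.rpow_add hy]
      congr 1
      rw [hwdef, hr]; ring
    calc ENNReal.ofReal (y^m) *
          (ENNReal.ofReal (y^(β-1)) * ∫⁻ s in Set.Ioi y, g s * ENNReal.ofReal (s^(-β)))^p
        ≤ ENNReal.ofReal (y^m) * (ENNReal.ofReal (y^(β-1)) *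
            ((J y)^(1/p) * ENNReal.ofReal (y^(-α)/α)^(1/q)))^p := by
          gcongr
          exact hH y hy
      _ = ENNReal.ofReal (α^(-r)) * (ENNReal.ofReal (y^w) * J y) := by
          rw [ENNReal.mul_rpow_of_nonneg _ _ hp0.le, ENNReal.mul_rpow_of_nonneg _ _ hp0.le,
            ← ENNReal.rpow_mul, ← ENNReal.rpow_mul, one_div_mul_cancel hp0.ne', ENNReal.rpow_one,
            hZ, ENNReal.ofReal_rpow_of_nonneg (Real.rpow_nonneg hy.le _) hp0.le,
            ← Real.rpow_mul hy.le, ← hyw]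
          ring
  -- integrate
  calc ∫⁻ y in Set.Ioi (0:ℝ), ENNReal.ofReal (y^m) *
        (ENNReal.ofReal (y^(β-1)) * ∫⁻ s in Set.Ioi y, g s * ENNReal.ofReal (s^(-β)))^p
      ≤ ∫⁻ y in Set.Ioi (0:ℝ), ENNReal.ofReal (α^(-r)) * (ENNReal.ofReal (y^w) * J y) :=
        lintegral_mono_ae ((ae_restrict_iff' measurableSet_Ioi).2 (ae_of_all _ hpt))
    _ = ENNReal.ofReal (α^(-r)) * ∫⁻ y in Set.Ioi (0:ℝ), ENNReal.ofReal (y^w) * J y :=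
        lintegral_const_mul' _ _ ENNReal.ofReal_ne_top
    _ = ENNReal.ofReal (α^(-r)) * ∫⁻ s in Set.Ioi (0:ℝ), K s * ENNReal.ofReal (s^(w+1)/(w+1)) := by
        rw [swap_aux w hw K hKm]
    _ = ENNReal.ofReal (α^(-r)) *
          ∫⁻ s in Set.Ioi (0:ℝ), ENNReal.ofReal α⁻¹ * (ENNReal.ofReal (s^m) * (g s)^p) := by
        congr 1
        refine setLIntegral_congr_fun measurableSet_Ioi (fun s hs => ?_)
        have hs0 : 0 < s := hs
        have hsm : ENNReal.ofReal (s^((ε-β)*p)) * ENNReal.ofReal (s^α) = ENNReal.ofReal (s^m) := by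
          rw [← ENNReal.ofReal_mul (Real.rpow_nonneg hs0.le _), ← Real.rpow_add hs0, he3]
        rw [hw1, div_eq_mul_inv, ENNReal.ofReal_mul (Real.rpow_nonneg hs0.le _)]
        calc (g s)^p * ENNReal.ofReal (s^((ε-β)*p)) * (ENNReal.ofReal (s^α) * ENNReal.ofReal α⁻¹)
            = ENNReal.ofReal α⁻¹ *
                ((ENNReal.ofReal (s^((ε-β)*p)) * ENNReal.ofReal (s^α)) * (g s)^p) := by ring
          _ = ENNReal.ofReal α⁻¹ * (ENNReal.ofReal (s^m) * (g s)^p) := by rw [hsm]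
    _ = ENNReal.ofReal α⁻¹ ^ p * ∫⁻ s in Set.Ioi (0:ℝ), ENNReal.ofReal (s^m) * (g s)^p := by
        rw [lintegral_const_mul' _ _ ENNReal.ofReal_ne_top, ← mul_assoc]
        congr 1
        rw [← ENNReal.ofReal_mul (Real.rpow_nonneg hα0.le _),
          ENNReal.ofReal_rpow_of_nonneg (inv_nonneg.2 hα0.le) hp0.le]
        congr 1
        rw [show α⁻¹ = α ^ (-1:ℝ) by rw [Real.rpow_neg_one], ← Real.rpow_add hα0,
          ← Real.rpow_mul hα0.le]
        congr 1
        rw [hr]; ring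

/-- Weighted Hardy inequality for `(H₂ f)(y) = y^{β-1} ∫_y^∞ f(s) s^{-β} ds`
when `(m+1)/p > 1-β`. -/
theorem stmt5 (p m β : ℝ) (hp : 1 < p) (h : (m + 1) / p > 1 - β)
    (f : ℝ → ℝ) (hf : MemLp f (ENNReal.ofReal p) (wm m)) :
    eLpNorm (fun y => y ^ (β - 1) * ∫ s in Set.Ioi y, f s * s ^ (-β))
        (ENNReal.ofReal p) (wm m) ≤
      ENNReal.ofReal |(m + 1) / p - (1 - β)|⁻¹ * eLpNorm f (ENNReal.ofReal p) (wm m) := by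
  have hp0 : (0:ℝ) < p := by linarith
  set A : ℝ := (m + 1) / p - (1 - β) with hA
  have hA0 : 0 < A := by rw [hA]; linarith
  have hmeas_d : Measurable fun y : ℝ => ENNReal.ofReal (y ^ m) :=
    (measurable_id'.pow_const m).ennreal_ofReal
  have hac1 : wm m ≪ volume.restrict (Set.Ioi 0) := withDensity_absolutelyContinuous _ _
  have hac2 : volume.restrict (Set.Ioi 0) ≪ wm m := by
    refine withDensity_absolutelyContinuous' hmeas_d.aemeasurable ?_
    filter_upwards [ae_restrict_mem measurableSet_Ioi] with y hy
    rw [Ne, ENNReal.ofReal_eq_zero, not_le]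
    exact Real.rpow_pos_of_pos hy m
  -- replace f by a strongly measurable representative
  set f' : ℝ → ℝ := hf.1.mk f with hf'def
  have hsm : StronglyMeasurable f' := hf.1.stronglyMeasurable_mk
  have heq : f =ᵐ[wm m] f' := hf.1.ae_eq_mk
  have heq' : f =ᵐ[volume.restrict (Set.Ioi 0)] f' := heq.filter_mono hac2.ae_le
  have hTeq : (fun y => y ^ (β - 1) * ∫ s in Set.Ioi y, f s * s ^ (-β))
      =ᵐ[wm m] (fun y => y ^ (β - 1) * ∫ s in Set.Ioi y, f' s * s ^ (-β)) := by
    filter_upwards [hac1.ae_le (ae_restrict_mem measurableSet_Ioi)] with y hy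
    have hy0 : (0:ℝ) < y := hy
    congr 1
    refine integral_congr_ae ?_
    exact (ae_restrict_of_ae_restrict_of_subset (Set.Ioi_subset_Ioi hy0.le) heq').mono
      (fun s hs => by dsimp only; rw [hs])
  rw [eLpNorm_congr_ae hTeq, eLpNorm_congr_ae heq]
  -- rewrite eLpNorms as lintegrals
  have hP0 : ENNReal.ofReal p ≠ 0 := by
    rw [Ne, ENNReal.ofReal_eq_zero, not_le]; exact hp0
  rw [eLpNorm_eq_lintegral_rpow_enorm_toReal hP0 ENNReal.ofReal_ne_top,
    eLpNorm_eq_lintegral_rpow_enorm_toReal hP0 ENNReal.ofReal_ne_top,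
    ENNReal.toReal_ofReal hp0.le]
  have hwd : ∀ u : ℝ → ℝ≥0∞, ∫⁻ y, u y ∂(wm m)
      = ∫⁻ y in Set.Ioi (0:ℝ), ENNReal.ofReal (y ^ m) * u y := by
    intro u
    rw [wm, lintegral_withDensity_eq_lintegral_mul_non_measurable _ hmeas_d
      (ae_of_all _ fun y => ENNReal.ofReal_lt_top) u]
    rfl
  rw [hwd, hwd]
  -- the ENNReal-valued function
  set g : ℝ → ℝ≥0∞ := fun s => (‖f' s‖₊ : ℝ≥0∞) with hg'
  have hg : Measurable g := hsm.measurable.nnnorm.coe_nnreal_ennreal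
  -- pointwise estimate
  have hptw : ∀ᵐ y ∂(volume.restrict (Set.Ioi (0:ℝ))),
      ENNReal.ofReal (y ^ m) * (‖y ^ (β - 1) * ∫ s in Set.Ioi y, f' s * s ^ (-β)‖₊ : ℝ≥0∞) ^ p
      ≤ ENNReal.ofReal (y ^ m) *
        (ENNReal.ofReal (y ^ (β - 1)) * ∫⁻ s in Set.Ioi y, g s * ENNReal.ofReal (s ^ (-β))) ^ p := by
    filter_upwards [ae_restrict_mem measurableSet_Ioi] with y hy
    have hy0 : (0:ℝ) < y := hy
    gcongr
    calc ((‖y ^ (β - 1) * ∫ s in Set.Ioi y, f' s * s ^ (-β)‖₊ : ℝ≥0∞))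
        = ENNReal.ofReal (y ^ (β - 1)) * (‖∫ s in Set.Ioi y, f' s * s ^ (-β)‖₊ : ℝ≥0∞) := by
          rw [nnnorm_mul, ENNReal.coe_mul, ← enorm_eq_nnnorm (y ^ (β - 1)), Real.enorm_eq_ofReal (Real.rpow_nonneg hy0.le _)]
      _ ≤ ENNReal.ofReal (y ^ (β - 1)) * ∫⁻ s in Set.Ioi y, g s * ENNReal.ofReal (s ^ (-β)) := by
          gcongr
          refine (enorm_integral_le_lintegral_enorm _).trans (le_of_eq ?_)
          refine setLIntegral_congr_fun measurableSet_Ioi (fun s hs => ?_)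
          rw [enorm_mul,
            Real.enorm_eq_ofReal (Real.rpow_nonneg (hy0.trans hs).le _)]
          rfl
  have hcore := core p (p/(p-1)) m β A ((1+A)/(p/(p-1))) ((β-1)*p - A*(p-1) + m)
    hp rfl hA hA0 rfl rfl g hg
  have hmain : ∫⁻ y in Set.Ioi (0:ℝ), ENNReal.ofReal (y ^ m) *
        (‖y ^ (β - 1) * ∫ s in Set.Ioi y, f' s * s ^ (-β)‖₊ : ℝ≥0∞) ^ p
      ≤ ENNReal.ofReal A⁻¹ ^ p *
        ∫⁻ s in Set.Ioi (0:ℝ), ENNReal.ofReal (s ^ m) * (‖f' s‖₊ : ℝ≥0∞) ^ p :=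
    (lintegral_mono_ae hptw).trans hcore
  calc (∫⁻ y in Set.Ioi (0:ℝ), ENNReal.ofReal (y ^ m) *
        (‖y ^ (β - 1) * ∫ s in Set.Ioi y, f' s * s ^ (-β)‖₊ : ℝ≥0∞) ^ p) ^ (1/p)
      ≤ (ENNReal.ofReal A⁻¹ ^ p *
          ∫⁻ s in Set.Ioi (0:ℝ), ENNReal.ofReal (s ^ m) * (‖f' s‖₊ : ℝ≥0∞) ^ p) ^ (1/p) :=
        ENNReal.rpow_le_rpow hmain (by positivity)
    _ = ENNReal.ofReal |A|⁻¹ *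
          (∫⁻ s in Set.Ioi (0:ℝ), ENNReal.ofReal (s ^ m) * (‖f' s‖₊ : ℝ≥0∞) ^ p) ^ (1/p) := by
        rw [ENNReal.mul_rpow_of_nonneg _ _ (by positivity : (0:ℝ) ≤ 1/p),
          ← ENNReal.rpow_mul, mul_one_div_cancel hp0.ne', ENNReal.rpow_one, abs_of_pos hA0]
end

section
/- Let $p > 1$, $m, \beta \in \mathbb{R}$ with $\frac{m+1}{p} < 1 - \beta$. Let $u \in W^{1,p}_{loc}((0,\infty))$ with $y^\beta u' \in L^p((0,\infty); y^m dy)$. Then the limit $u_0 := \lim_{y \to 0^+} u(y)$ exists and is finite, and $\|y^{\beta-1}(u - u_0)\|_{L^p((0,\infty); y^m dy)} \le C \|y^\beta u'\|_{L^p((0,\infty); y^m dy)}$ with $C = \left|\frac{m+1}{p} - (1-\beta)\right|^{-1}$. -/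
open MeasureTheory Filter Set
open scoped ENNReal Topology

lemma lintIoc (a : ℝ) (ha : -1 < a) (y : ℝ) (hy : 0 ≤ y) :
    ∫⁻ t in Set.Ioc 0 y, ENNReal.ofReal (t ^ a) = ENNReal.ofReal (y ^ (a + 1) / (a + 1)) := by
  have hint : IntegrableOn (fun t : ℝ => t ^ a) (Set.Ioc 0 y) := by
    have := (intervalIntegral.intervalIntegrable_rpow' (a := 0) (b := y) ha)
    rwa [intervalIntegrable_iff_integrableOn_Ioc_of_le hy] at this
  rw [← MeasureTheory.ofReal_integral_eq_lintegral_ofReal hint]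
  · congr 1
    rw [← intervalIntegral.integral_of_le hy, integral_rpow (Or.inl ha),
      Real.zero_rpow (by linarith), sub_zero]
  · filter_upwards [ae_restrict_mem measurableSet_Ioc] with t ht
    exact Real.rpow_nonneg ht.1.le _

lemma lintIoi (a : ℝ) (ha : a < -1) (t : ℝ) (ht : 0 < t) :
    ∫⁻ y in Set.Ioi t, ENNReal.ofReal (y ^ a) = ENNReal.ofReal (t ^ (a + 1) / (-(a + 1))) := by
  rw [← MeasureTheory.ofReal_integral_eq_lintegral_ofReal (integrableOn_Ioi_rpow_of_lt ha ht)]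
  · rw [integral_Ioi_rpow_of_lt ha ht]; rw [neg_div, div_neg]
  · filter_upwards [ae_restrict_mem measurableSet_Ioi] with y hy
    exact Real.rpow_nonneg (ht.trans hy).le _

lemma hoelder_step (p q l : ℝ) (hpq : Real.HolderConjugate p q) (hlq : l * q < 1)
    (G : ℝ → ℝ≥0∞) (hG : Measurable G) (y : ℝ) (hy : 0 < y) :
    ∫⁻ t in Ioc 0 y, G t ≤
      (∫⁻ t in Ioc 0 y, G t ^ p * ENNReal.ofReal (t ^ (l * p))) ^ (1 / p) *
        ENNReal.ofReal (y ^ (1 - l * q) / (1 - l * q)) ^ (1 / q) := by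
  have hmf : Measurable fun t : ℝ => G t * ENNReal.ofReal (t ^ l) :=
    hG.mul (ENNReal.measurable_ofReal.comp (measurable_id.pow_const _))
  have hmg : Measurable fun t : ℝ => ENNReal.ofReal (t ^ (-l)) :=
    ENNReal.measurable_ofReal.comp (measurable_id.pow_const _)
  have h1 : ∫⁻ t in Ioc 0 y, G t =
      ∫⁻ t in Ioc 0 y,
        ((fun t => G t * ENNReal.ofReal (t ^ l)) * fun t => ENNReal.ofReal (t ^ (-l))) t := by
    refine (setLIntegral_congr_fun measurableSet_Ioc (fun t ht => ?_)).symm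
    simp only [Pi.mul_apply]
    rw [mul_assoc, ← ENNReal.ofReal_mul (Real.rpow_nonneg ht.1.le _),
      ← Real.rpow_add ht.1, add_neg_cancel, Real.rpow_zero, ENNReal.ofReal_one, mul_one]
  rw [h1]
  refine le_trans
    (ENNReal.lintegral_mul_le_Lp_mul_Lq _ hpq hmf.aemeasurable hmg.aemeasurable) ?_
  have e1 : ∫⁻ t in Ioc 0 y, (G t * ENNReal.ofReal (t ^ l)) ^ p =
      ∫⁻ t in Ioc 0 y, G t ^ p * ENNReal.ofReal (t ^ (l * p)) := by
    refine setLIntegral_congr_fun measurableSet_Ioc (fun t ht => ?_)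
    rw [ENNReal.mul_rpow_of_nonneg _ _ hpq.nonneg,
      ENNReal.ofReal_rpow_of_pos (Real.rpow_pos_of_pos ht.1 _), ← Real.rpow_mul ht.1.le]
  have e2 : ∫⁻ t in Ioc 0 y, ENNReal.ofReal (t ^ (-l)) ^ q =
      ENNReal.ofReal (y ^ (1 - l * q) / (1 - l * q)) := by
    have : ∫⁻ t in Ioc 0 y, ENNReal.ofReal (t ^ (-l)) ^ q =
        ∫⁻ t in Ioc 0 y, ENNReal.ofReal (t ^ (-(l * q))) := by
      refine setLIntegral_congr_fun measurableSet_Ioc (fun t ht => ?_)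
      rw [ENNReal.ofReal_rpow_of_pos (Real.rpow_pos_of_pos ht.1 _), ← Real.rpow_mul ht.1.le,
        neg_mul]
    rw [this, lintIoc _ (by linarith) _ hy.le]
    ring_nf
  rw [e1, e2]

lemma hardy (p s : ℝ) (hp : 1 < p) (hs : s < p - 1) (G : ℝ → ℝ≥0∞) (hG : Measurable G) :
    ∫⁻ y in Ioi (0:ℝ), (∫⁻ t in Ioc 0 y, G t) ^ p * ENNReal.ofReal (y ^ (s - p)) ≤
      ENNReal.ofReal (p / (p - 1 - s)) ^ p *
        ∫⁻ t in Ioi (0:ℝ), G t ^ p * ENNReal.ofReal (t ^ s) := by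
  have hp0 : 0 < p := by linarith
  have hp1 : 0 < p - 1 := by linarith
  set q : ℝ := p / (p - 1) with hq
  have hpq : p.HolderConjugate q := (Real.holderConjugate_iff_eq_conjExponent hp).mpr rfl
  set l : ℝ := (1 + s) * (p - 1) / p ^ 2 with hl
  set κ : ℝ := (p - 1 - s) / p with hκdef
  have hκ : 0 < κ := div_pos (by linarith) hp0
  have hlq : l * q = (1 + s) / p := by
    rw [hl, hq]; field_simp
  have hlq1 : l * q < 1 := by rw [hlq, div_lt_one hp0]; linarith
  have h1lq : 1 - l * q = κ := by rw [hlq, hκdef]; field_simp; ring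
  have hlp : l * p = (1 + s) * (p - 1) / p := by rw [hl]; field_simp
  set E : ℝ := s - p + κ * (p - 1) with hE
  have hE1 : E + 1 = -κ := by rw [hE, hκdef]; field_simp; ring
  have hElt : E < -1 := by nlinarith [hκ]
  have hlpE : l * p + (E + 1) = s := by rw [hlp, hE1, hκdef]; field_simp; ring
  have hqp : 1 / q * p = p - 1 := by rw [hq]; field_simp
  set h : ℝ → ℝ≥0∞ := fun t => G t ^ p * ENNReal.ofReal (t ^ (l * p)) with hh
  have hhm : Measurable h := (hG.pow measurable_const).mul
    (ENNReal.measurable_ofReal.comp (measurable_id.pow_const _))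
  -- pointwise Hölder bound
  have key : ∀ y ∈ Ioi (0:ℝ),
      (∫⁻ t in Ioc 0 y, G t) ^ p * ENNReal.ofReal (y ^ (s - p)) ≤
        (ENNReal.ofReal (κ ^ (p - 1)))⁻¹ *
          (ENNReal.ofReal (y ^ E) * ∫⁻ t in Ioc 0 y, h t) := by
    intro y hy
    have hy : (0:ℝ) < y := hy
    have H := hoelder_step p q l hpq hlq1 G hG y hy
    have H2 := ENNReal.rpow_le_rpow H hp0.le
    rw [ENNReal.mul_rpow_of_nonneg _ _ hp0.le, ← ENNReal.rpow_mul, ← ENNReal.rpow_mul,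
      one_div_mul_cancel hp0.ne', ENNReal.rpow_one, hqp, h1lq] at H2
    refine le_trans (mul_le_mul_left H2 _) (le_of_eq ?_)
    have e1 : ENNReal.ofReal (y ^ κ / κ) ^ (p - 1) =
        ENNReal.ofReal (y ^ (κ * (p - 1))) * (ENNReal.ofReal (κ ^ (p - 1)))⁻¹ := by
      rw [ENNReal.ofReal_rpow_of_pos (div_pos (Real.rpow_pos_of_pos hy _) hκ),
        Real.div_rpow (Real.rpow_nonneg hy.le _) hκ.le, ← Real.rpow_mul hy.le,
        ENNReal.ofReal_div_of_pos (Real.rpow_pos_of_pos hκ _), div_eq_mul_inv]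
    rw [e1]
    have e2 : ENNReal.ofReal (y ^ (κ * (p - 1))) * ENNReal.ofReal (y ^ (s - p)) =
        ENNReal.ofReal (y ^ E) := by
      rw [← ENNReal.ofReal_mul (Real.rpow_nonneg hy.le _), ← Real.rpow_add hy, hE]
      ring_nf
    calc (∫⁻ t in Ioc 0 y, h t) *
          (ENNReal.ofReal (y ^ (κ * (p - 1))) * (ENNReal.ofReal (κ ^ (p - 1)))⁻¹) *
          ENNReal.ofReal (y ^ (s - p))
        = (ENNReal.ofReal (κ ^ (p - 1)))⁻¹ *
          ((ENNReal.ofReal (y ^ (κ * (p - 1))) * ENNReal.ofReal (y ^ (s - p))) *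
            ∫⁻ t in Ioc 0 y, h t) := by ring
      _ = (ENNReal.ofReal (κ ^ (p - 1)))⁻¹ *
          (ENNReal.ofReal (y ^ E) * ∫⁻ t in Ioc 0 y, h t) := by rw [e2]
  -- Tonelli
  set F : ℝ × ℝ → ℝ≥0∞ :=
    fun z => Set.indicator {z : ℝ × ℝ | z.2 ≤ z.1}
      (fun z => ENNReal.ofReal (z.1 ^ E) * h z.2) z with hF
  have hFm : Measurable F :=
    Measurable.indicator
      ((ENNReal.measurable_ofReal.comp (measurable_fst.pow_const E)).mul
        (hhm.comp measurable_snd))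
      (measurableSet_le measurable_snd measurable_fst)
  have swap : ∫⁻ y in Ioi (0:ℝ), ENNReal.ofReal (y ^ E) * ∫⁻ t in Ioc 0 y, h t =
      ∫⁻ t in Ioi (0:ℝ), h t * ∫⁻ y in Ioi t, ENNReal.ofReal (y ^ E) := by
    have left : ∀ y : ℝ, ENNReal.ofReal (y ^ E) * ∫⁻ t in Ioc 0 y, h t =
        ∫⁻ t in Ioi (0:ℝ), F (y, t) := by
      intro y
      have : ∀ t : ℝ, F (y, t) =
          (Iic y).indicator (fun t => ENNReal.ofReal (y ^ E) * h t) t := by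
        intro t; simp only [hF, Set.indicator, Set.mem_setOf_eq, Set.mem_Iic]
      simp_rw [this]
      rw [lintegral_indicator measurableSet_Iic, Measure.restrict_restrict measurableSet_Iic,
        Set.Iic_inter_Ioi, lintegral_const_mul' _ _ ENNReal.ofReal_ne_top]
    have right : ∀ t ∈ Ioi (0:ℝ), ∫⁻ y in Ioi (0:ℝ), F (y, t) =
        h t * ∫⁻ y in Ioi t, ENNReal.ofReal (y ^ E) := by
      intro t ht
      have : ∀ y : ℝ, F (y, t) =
          (Ici t).indicator (fun y => ENNReal.ofReal (y ^ E) * h t) y := by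
        intro y; simp only [hF, Set.indicator, Set.mem_setOf_eq, Set.mem_Ici]
      simp_rw [this]
      have hset : Ici t ∩ Ioi (0:ℝ) = Ici t :=
        Set.inter_eq_left.mpr fun x hx => show (0:ℝ) < x from lt_of_lt_of_le ht hx
      rw [lintegral_indicator measurableSet_Ici, Measure.restrict_restrict measurableSet_Ici,
        hset, Measure.restrict_congr_set Ioi_ae_eq_Ici.symm]
      have hcomm : ∀ a : ℝ, ENNReal.ofReal (a ^ E) * h t = h t * ENNReal.ofReal (a ^ E) :=
        fun a => mul_comm _ _
      simp_rw [hcomm]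
      exact lintegral_const_mul _ (ENNReal.measurable_ofReal.comp (measurable_id.pow_const _))
    calc ∫⁻ y in Ioi (0:ℝ), ENNReal.ofReal (y ^ E) * ∫⁻ t in Ioc 0 y, h t
        = ∫⁻ y in Ioi (0:ℝ), ∫⁻ t in Ioi (0:ℝ), F (y, t) := by simp_rw [left]
      _ = ∫⁻ t in Ioi (0:ℝ), ∫⁻ y in Ioi (0:ℝ), F (y, t) :=
          lintegral_lintegral_swap hFm.aemeasurable
      _ = ∫⁻ t in Ioi (0:ℝ), h t * ∫⁻ y in Ioi t, ENNReal.ofReal (y ^ E) :=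
          setLIntegral_congr_fun measurableSet_Ioi right
  -- final computation
  calc ∫⁻ y in Ioi (0:ℝ), (∫⁻ t in Ioc 0 y, G t) ^ p * ENNReal.ofReal (y ^ (s - p))
      ≤ ∫⁻ y in Ioi (0:ℝ), (ENNReal.ofReal (κ ^ (p - 1)))⁻¹ *
          (ENNReal.ofReal (y ^ E) * ∫⁻ t in Ioc 0 y, h t) :=
        lintegral_mono_ae ((ae_restrict_mem measurableSet_Ioi).mono fun y hy => key y hy)
    _ = (ENNReal.ofReal (κ ^ (p - 1)))⁻¹ *
          ∫⁻ y in Ioi (0:ℝ), ENNReal.ofReal (y ^ E) * ∫⁻ t in Ioc 0 y, h t :=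
        lintegral_const_mul' _ _ (ENNReal.inv_ne_top.mpr (by simp [Real.rpow_pos_of_pos hκ]))
    _ = (ENNReal.ofReal (κ ^ (p - 1)))⁻¹ *
          ∫⁻ t in Ioi (0:ℝ), h t * ∫⁻ y in Ioi t, ENNReal.ofReal (y ^ E) := by rw [swap]
    _ = ENNReal.ofReal (p / (p - 1 - s)) ^ p *
          ∫⁻ t in Ioi (0:ℝ), G t ^ p * ENNReal.ofReal (t ^ s) := by
        have inner : ∀ t ∈ Ioi (0:ℝ), h t * ∫⁻ y in Ioi t, ENNReal.ofReal (y ^ E) =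
            ENNReal.ofReal κ⁻¹ * (G t ^ p * ENNReal.ofReal (t ^ s)) := by
          intro t ht
          have ht : (0:ℝ) < t := ht
          rw [lintIoi E hElt t ht, hE1, neg_neg,
            div_eq_mul_inv, ENNReal.ofReal_mul (Real.rpow_nonneg ht.le _), hh]
          simp only []
          have hlpE' : l * p + -κ = s := by rw [← hE1]; exact hlpE
          rw [mul_assoc (G t ^ p), ← mul_assoc (ENNReal.ofReal (t ^ (l * p))),
            ← ENNReal.ofReal_mul (Real.rpow_nonneg ht.le _), ← Real.rpow_add ht, hlpE']
          ring
        rw [setLIntegral_congr_fun measurableSet_Ioi inner,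
          lintegral_const_mul' _ _ ENNReal.ofReal_ne_top, ← mul_assoc]
        congr 1
        have : p / (p - 1 - s) = κ⁻¹ := by rw [hκdef]; field_simp
        rw [this, ENNReal.ofReal_rpow_of_pos (inv_pos.mpr hκ),
          ← ENNReal.ofReal_inv_of_pos (Real.rpow_pos_of_pos hκ _),
          ← ENNReal.ofReal_mul (by positivity)]
        congr 1
        conv_rhs => rw [show p = (p - 1) + 1 by ring]
        rw [Real.rpow_add (inv_pos.mpr hκ), Real.rpow_one, Real.inv_rpow hκ.le]

/-- Trace-Hardy inequality at `0`: if `(m+1)/p < 1-β` and `y^β u' ∈ L^p_m` then the trace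
`u₀ = lim_{y→0⁺} u(y)` exists and `‖y^{β-1}(u-u₀)‖ ≤ C ‖y^β u'‖`. -/
theorem stmt6 (p m β : ℝ) (hp : 1 < p) (h : (m + 1) / p < 1 - β)
    (u u' : ℝ → ℝ) (hderiv : ∀ y, 0 < y → HasDerivAt u (u' y) y)
    (hmem : MemLp (fun y => y ^ β * u' y) (ENNReal.ofReal p) (wm m)) :
    ∃ u₀ : ℝ, Tendsto u (𝓝[>] 0) (𝓝 u₀) ∧
      eLpNorm (fun y => y ^ (β - 1) * (u y - u₀)) (ENNReal.ofReal p) (wm m) ≤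
        ENNReal.ofReal |(m + 1) / p - (1 - β)|⁻¹ *
          eLpNorm (fun y => y ^ β * u' y) (ENNReal.ofReal p) (wm m) := by
  have hp0 : 0 < p := lt_trans one_pos hp
  have hp1 : 0 < p - 1 := by linarith
  set s : ℝ := m + β * p with hsdef
  have hs : s < p - 1 := by
    have := (div_lt_iff₀ hp0).mp h
    nlinarith
  set G : ℝ → ℝ≥0∞ := fun t => (‖deriv u t‖₊ : ℝ≥0∞) with hGdef
  have hG : Measurable G := (measurable_deriv u).nnnorm.coe_nnreal_ennreal
  have hud : ∀ y : ℝ, 0 < y → deriv u y = u' y := fun y hy => (hderiv y hy).deriv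
  have hwm : ∀ f : ℝ → ℝ≥0∞,
      ∫⁻ y, f y ∂(wm m) = ∫⁻ y in Ioi 0, ENNReal.ofReal (y ^ m) * f y := fun f =>
    lintegral_withDensity_eq_lintegral_mul_non_measurable _
      (Measurable.ennreal_ofReal (measurable_id.pow_const _))
      (ae_of_all _ fun y => ENNReal.ofReal_lt_top) f
  have eLp : ∀ f : ℝ → ℝ, eLpNorm f (ENNReal.ofReal p) (wm m) =
      (∫⁻ y in Ioi 0, ENNReal.ofReal (y ^ m) * (‖f y‖₊ : ℝ≥0∞) ^ p) ^ (1 / p) := by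
    intro f
    rw [eLpNorm_eq_lintegral_rpow_enorm_toReal
      (by simp only [ne_eq, ENNReal.ofReal_eq_zero, not_le]; exact hp0) ENNReal.ofReal_ne_top,
      ENNReal.toReal_ofReal hp0.le, hwm]
    rfl
  set A : ℝ≥0∞ := ∫⁻ t in Ioi 0, G t ^ p * ENNReal.ofReal (t ^ s) with hA
  have hRHS : eLpNorm (fun y => y ^ β * u' y) (ENNReal.ofReal p) (wm m) = A ^ (1 / p) := by
    rw [eLp]
    congr 1
    refine setLIntegral_congr_fun measurableSet_Ioi (fun y hy => ?_)
    have hy : (0 : ℝ) < y := hy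
    rw [nnnorm_mul, ENNReal.coe_mul, ← enorm_eq_nnnorm, Real.enorm_eq_ofReal_abs,
      abs_of_pos (Real.rpow_pos_of_pos hy _), ← hud y hy,
      ENNReal.mul_rpow_of_nonneg _ _ hp0.le,
      ENNReal.ofReal_rpow_of_pos (Real.rpow_pos_of_pos hy _), ← Real.rpow_mul hy.le,
      ← mul_assoc, ← ENNReal.ofReal_mul (Real.rpow_nonneg hy.le _), ← Real.rpow_add hy,
      ← hsdef]
    exact mul_comm _ _
  have hAfin : A ≠ ⊤ := by
    have h2 := hmem.2
    rw [hRHS] at h2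
    intro hc
    rw [hc, ENNReal.top_rpow_of_pos (by positivity)] at h2
    exact (lt_irrefl _ h2).elim
  set q : ℝ := p / (p - 1) with hq
  have hpq : p.HolderConjugate q := (Real.holderConjugate_iff_eq_conjExponent hp).mpr rfl
  have hfin : ∀ Y : ℝ, 0 < Y → ∫⁻ t in Ioc 0 Y, G t < ⊤ := by
    intro Y hY
    have hsq : s / p * q = s / (p - 1) := by rw [hq]; field_simp
    have hlq : s / p * q < 1 := by rw [hsq]; exact (div_lt_one hp1).mpr hs
    have H := hoelder_step p q (s / p) hpq hlq G hG Y hY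
    rw [div_mul_cancel₀ _ hp0.ne'] at H
    refine lt_of_le_of_lt H (ENNReal.mul_lt_top ?_ ?_)
    · exact ENNReal.rpow_lt_top_of_nonneg (by positivity)
        ((lt_of_le_of_lt (lintegral_mono_set Set.Ioc_subset_Ioi_self)
          (lt_top_iff_ne_top.mpr hAfin)).ne)
    · exact ENNReal.rpow_lt_top_of_nonneg (by positivity) ENNReal.ofReal_ne_top
  have hGint : ∀ y : ℝ, ∫⁻ t in Ioc 0 y, (‖u' t‖₊ : ℝ≥0∞) = ∫⁻ t in Ioc 0 y, G t := by
    intro y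
    refine lintegral_congr_ae ?_
    filter_upwards [ae_restrict_mem measurableSet_Ioc] with t ht
    rw [hGdef]; simp only []; rw [hud t ht.1]
  have hIntOn : ∀ Y : ℝ, 0 < Y → IntegrableOn u' (Ioc 0 Y) := by
    intro Y hY
    have hae : ∀ᵐ t ∂(volume.restrict (Ioc 0 Y)), deriv u t = u' t := by
      filter_upwards [ae_restrict_mem measurableSet_Ioc] with t ht using hud t ht.1
    refine ⟨((measurable_deriv u).aestronglyMeasurable).congr hae, ?_⟩
    show (∫⁻ t in Ioc 0 Y, (‖u' t‖₊ : ℝ≥0∞)) < ⊤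
    rw [hGint]
    exact hfin Y hY
  set I : ℝ → ℝ := fun y => ∫ t in Ioc 0 y, u' t with hI
  have hsub : ∀ a b : ℝ, 0 < a → a ≤ b → u b - u a = I b - I a := by
    intro a b ha hab
    have hb : 0 < b := lt_of_lt_of_le ha hab
    have hsplit : I b = I a + ∫ t in Ioc a b, u' t := by
      rw [hI]; simp only []
      rw [← Set.Ioc_union_Ioc_eq_Ioc ha.le hab,
        setIntegral_union (Set.Ioc_disjoint_Ioc_of_le le_rfl) measurableSet_Ioc
          ((hIntOn b hb).mono_set (Set.Ioc_subset_Ioc_right hab))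
          ((hIntOn b hb).mono_set (Set.Ioc_subset_Ioc_left ha.le))]
    have hftc : ∫ t in Ioc a b, u' t = u b - u a := by
      rw [← intervalIntegral.integral_of_le hab]
      refine intervalIntegral.integral_eq_sub_of_hasDerivAt
        (fun t ht' => hderiv t ?_) ?_
      · rw [Set.uIcc_of_le hab] at ht'
        exact lt_of_lt_of_le ha ht'.1
      · rw [intervalIntegrable_iff_integrableOn_Ioc_of_le hab]
        exact (hIntOn b hb).mono_set (Set.Ioc_subset_Ioc_left ha.le)
    rw [hsplit, hftc]; ring
  set u₀ : ℝ := u 1 - I 1 with hu0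
  have hrep : ∀ y : ℝ, 0 < y → u y - u₀ = I y := by
    intro y hy
    rcases le_total y 1 with h1 | h1
    · have := hsub y 1 hy h1; rw [hu0]; linarith
    · have := hsub 1 y one_pos h1; rw [hu0]; linarith
  set μG : Measure ℝ := (volume.restrict (Ioi 0)).withDensity G with hμGdef
  have hμG : ∀ y : ℝ, μG (Ioc 0 y) = ∫⁻ t in Ioc 0 y, G t := by
    intro y
    rw [hμGdef, withDensity_apply _ measurableSet_Ioc,
      Measure.restrict_restrict measurableSet_Ioc,
      Set.inter_eq_left.mpr (fun x hx => hx.1)]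
  refine ⟨u₀, ?_, ?_⟩
  · -- the trace limit
    set S : ℕ → Set ℝ := fun n => Ioc (0 : ℝ) (1 / (n + 1)) with hS
    have hanti : Antitone S := by
      intro n n' hnn'
      have hc : (n : ℝ) ≤ n' := by exact_mod_cast hnn'
      exact Set.Ioc_subset_Ioc_right (one_div_le_one_div_of_le (by positivity) (by linarith))
    have hiInter : ⋂ n, S n = ∅ := by
      ext t
      simp only [Set.mem_iInter, Set.mem_empty_iff_false, iff_false, hS, Set.mem_Ioc]
      intro hall
      obtain ⟨n, hn⟩ := exists_nat_one_div_lt (hall 0).1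
      exact absurd (hall n).2 (not_le.mpr (by exact_mod_cast hn))
    have htend : Tendsto (μG ∘ S) atTop (𝓝 0) := by
      have := tendsto_measure_iInter_atTop
        (μ := μG) (fun n => measurableSet_Ioc.nullMeasurableSet) hanti
        ⟨0, by rw [hμG]; exact (hfin _ (by norm_num)).ne⟩
      rwa [hiInter, measure_empty] at this
    have hItend : Tendsto I (𝓝[>] (0 : ℝ)) (𝓝 0) := by
      rw [Metric.tendsto_nhdsWithin_nhds]
      intro ε hε
      have hev : ∀ᶠ n in atTop, (μG ∘ S) n < ENNReal.ofReal ε :=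
        htend.eventually_lt_const (ENNReal.ofReal_pos.mpr hε)
      obtain ⟨n, hn⟩ := hev.exists
      refine ⟨1 / (n + 1), by positivity, fun {y} hy hyd => ?_⟩
      have hy0 : (0 : ℝ) < y := hy
      rw [Real.dist_eq, sub_zero, abs_of_pos hy0] at hyd
      have hb1 : ENNReal.ofReal |I y| ≤ μG (Ioc (0:ℝ) (1/(n+1))) := by
        calc ENNReal.ofReal |I y| = (‖I y‖₊ : ℝ≥0∞) := (Real.enorm_eq_ofReal_abs _).symm
          _ ≤ ∫⁻ t in Ioc 0 y, (‖u' t‖₊ : ℝ≥0∞) := enorm_integral_le_lintegral_enorm _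
          _ = ∫⁻ t in Ioc 0 y, G t := hGint y
          _ ≤ μG (Ioc (0:ℝ) (1/(n+1))) := by
              rw [hμG]
              exact lintegral_mono_set (Set.Ioc_subset_Ioc_right hyd.le)
      rw [Real.dist_eq, sub_zero]
      have h3 := lt_of_le_of_lt hb1 hn
      rwa [ENNReal.ofReal_lt_ofReal_iff hε] at h3
    have h4 : Tendsto (fun y => u₀ + I y) (𝓝[>] (0 : ℝ)) (𝓝 (u₀ + 0)) :=
      tendsto_const_nhds.add hItend
    rw [add_zero] at h4
    refine h4.congr' ?_
    filter_upwards [self_mem_nhdsWithin] with y hy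
    have := hrep y hy
    linarith
  · -- the inequality
    rw [hRHS, eLp]
    have habs : |(m + 1) / p - (1 - β)|⁻¹ = p / (p - 1 - s) := by
      rw [abs_of_neg (by linarith : (m + 1) / p - (1 - β) < 0), hsdef]
      field_simp
      rw [← div_neg]; congr 1; ring
    have hstep : (∫⁻ y in Ioi 0,
        ENNReal.ofReal (y ^ m) * (‖y ^ (β - 1) * (u y - u₀)‖₊ : ℝ≥0∞) ^ p) ≤
        ENNReal.ofReal (p / (p - 1 - s)) ^ p * A := by
      refine le_trans ?_ (hardy p s hp hs G hG)
      refine lintegral_mono_ae ?_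
      filter_upwards [ae_restrict_mem measurableSet_Ioi] with y hy
      have hy : (0 : ℝ) < y := hy
      rw [nnnorm_mul, ENNReal.coe_mul, ← enorm_eq_nnnorm, Real.enorm_eq_ofReal_abs,
        abs_of_pos (Real.rpow_pos_of_pos hy _),
        ENNReal.mul_rpow_of_nonneg _ _ hp0.le,
        ENNReal.ofReal_rpow_of_pos (Real.rpow_pos_of_pos hy _), ← Real.rpow_mul hy.le,
        ← mul_assoc, ← ENNReal.ofReal_mul (Real.rpow_nonneg hy.le _), ← Real.rpow_add hy]
      have he : m + (β - 1) * p = s - p := by rw [hsdef]; ring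
      rw [he, mul_comm]
      refine mul_le_mul_left (ENNReal.rpow_le_rpow ?_ hp0.le) _
      rw [← enorm_eq_nnnorm, Real.enorm_eq_ofReal_abs] at *
      calc ENNReal.ofReal |u y - u₀| = ENNReal.ofReal |I y| := by rw [hrep y hy]
        _ = (‖I y‖₊ : ℝ≥0∞) := (Real.enorm_eq_ofReal_abs _).symm
        _ ≤ ∫⁻ t in Ioc 0 y, (‖u' t‖₊ : ℝ≥0∞) := enorm_integral_le_lintegral_enorm _
        _ = ∫⁻ t in Ioc 0 y, G t := hGint y
    calc (∫⁻ y in Ioi 0,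
          ENNReal.ofReal (y ^ m) * (‖y ^ (β - 1) * (u y - u₀)‖₊ : ℝ≥0∞) ^ p) ^ (1 / p)
        ≤ (ENNReal.ofReal (p / (p - 1 - s)) ^ p * A) ^ (1 / p) :=
          ENNReal.rpow_le_rpow hstep (by positivity)
      _ = ENNReal.ofReal (p / (p - 1 - s)) * A ^ (1 / p) := by
          rw [ENNReal.mul_rpow_of_nonneg _ _ (by positivity), ← ENNReal.rpow_mul,
            mul_one_div_cancel hp0.ne', ENNReal.rpow_one]
      _ = ENNReal.ofReal |(m + 1) / p - (1 - β)|⁻¹ * A ^ (1 / p) := by rw [habs]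
end

section
/- Let $p > 1$, $m, \beta \in \mathbb{R}$ with $\frac{m+1}{p} > 1 - \beta$. Let $u \in W^{1,p}_{loc}((0,\infty))$ with $y^\beta u' \in L^p((0,\infty); y^m dy)$. Then the limit $u_\infty := \lim_{y \to \infty} u(y)$ exists and is finite, and $\|y^{\beta-1}(u - u_\infty)\|_{L^p((0,\infty); y^m dy)} \le C \|y^\beta u'\|_{L^p((0,\infty); y^m dy)}$ with $C = \left|\frac{m+1}{p} - (1-\beta)\right|^{-1}$. -/
open MeasureTheory Filter
open Set
open scoped ENNReal Topology

lemma measurable_ofReal_rpow (c : ℝ) :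
    Measurable fun t : ℝ => ENNReal.ofReal (t ^ c) :=
  (measurable_id.pow_const c).ennreal_ofReal

lemma lintA {y c : ℝ} (hy : 0 < y) (hc : c < -1) :
    ∫⁻ t in Ioi y, ENNReal.ofReal (t ^ c) = ENNReal.ofReal (y ^ (c + 1) / (-(c + 1))) := by
  rw [← ofReal_integral_eq_lintegral_ofReal (integrableOn_Ioi_rpow_of_lt hc hy)
      (ae_restrict_of_forall_mem measurableSet_Ioi fun t ht =>
        Real.rpow_nonneg (le_of_lt (hy.trans ht)) c)]
  rw [integral_Ioi_rpow_of_lt hc hy]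
  rw [neg_div, div_neg]

lemma lintB {t b : ℝ} (ht : 0 < t) (hb : -1 < b) :
    ∫⁻ y in Ioo 0 t, ENNReal.ofReal (y ^ b) = ENNReal.ofReal (t ^ (b + 1) / (b + 1)) := by
  have hIoc : (volume.restrict (Ioo (0:ℝ) t)) = volume.restrict (Ioc (0:ℝ) t) := by
    rw [Measure.restrict_congr_set Ioo_ae_eq_Ioc]
  have hint : IntegrableOn (fun y : ℝ => y ^ b) (Ioc 0 t) := by
    rw [← intervalIntegrable_iff_integrableOn_Ioc_of_le ht.le]
    exact intervalIntegral.intervalIntegrable_rpow' hb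
  rw [show (∫⁻ y in Ioo (0:ℝ) t, ENNReal.ofReal (y ^ b)) = ∫⁻ y in Ioc (0:ℝ) t, ENNReal.ofReal (y ^ b) from by rw [hIoc]]
  rw [← ofReal_integral_eq_lintegral_ofReal hint
      (ae_restrict_of_forall_mem measurableSet_Ioc fun y hy => Real.rpow_nonneg hy.1.le b)]
  rw [← intervalIntegral.integral_of_le ht.le, integral_rpow (Or.inl hb)]
  rw [Real.zero_rpow (by linarith : b + 1 ≠ 0), sub_zero]

lemma holder_step {p q s : ℝ} (hpq : p.HolderConjugate q) (hs : 1 < s * q)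
    (f : ℝ → ℝ≥0∞) (hf : Measurable f) {y : ℝ} (hy : 0 < y) :
    ∫⁻ t in Ioi y, f t ≤
      (∫⁻ t in Ioi y, f t ^ p * ENNReal.ofReal (t ^ (s * p))) ^ (1 / p) *
        ENNReal.ofReal (y ^ (1 - s * q) / (s * q - 1)) ^ (1 / q) := by
  have key : ∫⁻ t in Ioi y, f t =
      ∫⁻ t in Ioi y, ((fun t => f t * ENNReal.ofReal (t ^ s)) *
        fun t => ENNReal.ofReal (t ^ (-s))) t := by
    refine lintegral_congr_ae (ae_restrict_of_forall_mem measurableSet_Ioi fun t ht => ?_)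
    have ht0 : 0 < t := hy.trans ht
    simp only [Pi.mul_apply]
    rw [mul_assoc, ← ENNReal.ofReal_mul (Real.rpow_nonneg ht0.le s),
      ← Real.rpow_add ht0, add_neg_cancel, Real.rpow_zero, ENNReal.ofReal_one, mul_one]
  rw [key]
  refine le_trans (ENNReal.lintegral_mul_le_Lp_mul_Lq _ hpq
    ((hf.mul (measurable_ofReal_rpow s)).aemeasurable)
    ((measurable_ofReal_rpow (-s)).aemeasurable)) ?_
  have e1 : ∫⁻ t in Ioi y, (f t * ENNReal.ofReal (t ^ s)) ^ p =
      ∫⁻ t in Ioi y, f t ^ p * ENNReal.ofReal (t ^ (s * p)) := by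
    refine lintegral_congr_ae (ae_restrict_of_forall_mem measurableSet_Ioi fun t ht => ?_)
    have ht0 : 0 < t := hy.trans ht
    simp only []
    rw [ENNReal.mul_rpow_of_nonneg _ _ hpq.nonneg,
      ENNReal.ofReal_rpow_of_pos (Real.rpow_pos_of_pos ht0 s),
      ← Real.rpow_mul ht0.le]
  have e2 : ∫⁻ t in Ioi y, ENNReal.ofReal (t ^ (-s)) ^ q =
      ENNReal.ofReal (y ^ (1 - s * q) / (s * q - 1)) := by
    have : ∀ t ∈ Ioi y, ENNReal.ofReal (t ^ (-s)) ^ q = ENNReal.ofReal (t ^ (-(s * q))) := by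
      intro t ht
      have ht0 : 0 < t := hy.trans ht
      rw [ENNReal.ofReal_rpow_of_pos (Real.rpow_pos_of_pos ht0 _), ← Real.rpow_mul ht0.le,
        neg_mul]
    rw [lintegral_congr_ae (ae_restrict_of_forall_mem measurableSet_Ioi this),
      lintA hy (by linarith : -(s * q) < -1)]
    congr 2 <;> ring
  rw [e1, e2]

lemma tonelli_step {b : ℝ} (hb : -1 < b) (φ : ℝ → ℝ≥0∞) (hφ : Measurable φ) :
    ∫⁻ y in Ioi 0, (∫⁻ t in Ioi y, φ t) * ENNReal.ofReal (y ^ b) =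
      ∫⁻ t in Ioi 0, φ t * ENNReal.ofReal (t ^ (b + 1) / (b + 1)) := by
  set W : ℝ → ℝ → ℝ≥0∞ := fun y t =>
    {z : ℝ × ℝ | z.1 < z.2}.indicator (fun z => ENNReal.ofReal (z.1 ^ b) * φ z.2) (y, t) with hW
  have hWm : Measurable (Function.uncurry W) := by
    have : Function.uncurry W = {z : ℝ × ℝ | z.1 < z.2}.indicator
        (fun z => ENNReal.ofReal (z.1 ^ b) * φ z.2) := rfl
    rw [this]
    exact (( (measurable_ofReal_rpow b).comp measurable_fst).mul
      (hφ.comp measurable_snd)).indicator (measurableSet_lt measurable_fst measurable_snd)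
  have left : ∀ y ∈ Ioi (0:ℝ), (∫⁻ t in Ioi (0:ℝ), W y t) =
      (∫⁻ t in Ioi y, φ t) * ENNReal.ofReal (y ^ b) := by
    intro y hy
    have : ∀ t : ℝ, W y t = (Ioi y).indicator (fun t => ENNReal.ofReal (y ^ b) * φ t) t := by
      intro t
      by_cases hlt : y < t
      · simp [hW, hlt, Set.indicator_of_mem, Set.mem_Ioi.mpr hlt]
      · simp [hW, hlt, Set.indicator_of_notMem, fun hτ => hlt (Set.mem_Ioi.mp hτ)]
    simp_rw [this]
    rw [lintegral_indicator measurableSet_Ioi, Measure.restrict_restrict measurableSet_Ioi,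
      Set.inter_eq_self_of_subset_left (Ioi_subset_Ioi (le_of_lt hy)),
      lintegral_const_mul' _ _ ENNReal.ofReal_ne_top, mul_comm]
  have right : ∀ t ∈ Ioi (0:ℝ), (∫⁻ y in Ioi (0:ℝ), W y t) =
      φ t * ENNReal.ofReal (t ^ (b + 1) / (b + 1)) := by
    intro t ht
    have : ∀ y : ℝ, W y t = (Iio t).indicator (fun y => ENNReal.ofReal (y ^ b) * φ t) y := by
      intro y
      by_cases hlt : y < t
      · simp [hW, hlt, Set.indicator_of_mem, Set.mem_Iio.mpr hlt]
      · simp [hW, hlt, Set.indicator_of_notMem, fun hτ => hlt (Set.mem_Iio.mp hτ)]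
    simp_rw [this]
    rw [lintegral_indicator measurableSet_Iio, Measure.restrict_restrict measurableSet_Iio,
      Set.Iio_inter_Ioi,
      lintegral_mul_const'' (φ t) (measurable_ofReal_rpow b).aemeasurable,
      lintB (Set.mem_Ioi.mp ht) hb, mul_comm]
  calc ∫⁻ y in Ioi 0, (∫⁻ t in Ioi y, φ t) * ENNReal.ofReal (y ^ b)
      = ∫⁻ y in Ioi 0, ∫⁻ t in Ioi 0, W y t := by
        refine (lintegral_congr_ae (ae_restrict_of_forall_mem measurableSet_Ioi
          fun y hy => (left y hy).symm))
    _ = ∫⁻ t in Ioi 0, ∫⁻ y in Ioi 0, W y t := lintegral_lintegral_swap hWm.aemeasurable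
    _ = ∫⁻ t in Ioi 0, φ t * ENNReal.ofReal (t ^ (b + 1) / (b + 1)) :=
        lintegral_congr_ae (ae_restrict_of_forall_mem measurableSet_Ioi right)

lemma hardy_lintegral {p q a : ℝ} (hpq : p.HolderConjugate q) (ha : -1 < a)
    (f : ℝ → ℝ≥0∞) (hf : Measurable f) :
    ∫⁻ y in Ioi 0, (∫⁻ t in Ioi y, f t) ^ p * ENNReal.ofReal (y ^ a) ≤
      ENNReal.ofReal ((((a + 1) / p)⁻¹) ^ p) *
        ∫⁻ t in Ioi 0, f t ^ p * ENNReal.ofReal (t ^ (a + p)) := by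
  have hp0 : 0 < p := hpq.pos
  have hq0 : 0 < q := hpq.symm.pos
  have hp1 : 1 < p := hpq.lt
  set v : ℝ := (a + 1) / p with hv_def
  have hv : 0 < v := div_pos (by linarith) hp0
  have hpv : p * v = a + 1 := by rw [hv_def]; field_simp
  set s : ℝ := (v + 1) / q with hs_def
  have hsq : s * q = v + 1 := div_mul_cancel₀ _ hq0.ne'
  have hsq1 : 1 < s * q := by rw [hsq]; linarith
  have hdiv : p / q = p - 1 := hpq.div_conj_eq_sub_one
  have hsp : s * p = (v + 1) * (p - 1) := by
    rw [hs_def, div_mul_eq_mul_div, mul_div_assoc, hdiv]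
  set φ : ℝ → ℝ≥0∞ := fun t => f t ^ p * ENNReal.ofReal (t ^ (s * p)) with hφ_def
  have hφm : Measurable φ := (hf.pow_const p).mul (measurable_ofReal_rpow (s * p))
  set K : ℝ≥0∞ := ENNReal.ofReal ((v ^ (p - 1))⁻¹) with hK_def
  have step1 : ∀ y ∈ Ioi (0:ℝ), (∫⁻ t in Ioi y, f t) ^ p * ENNReal.ofReal (y ^ a) ≤
      ((∫⁻ t in Ioi y, φ t) * ENNReal.ofReal (y ^ (v - 1))) * K := by
    intro y hy
    rw [Set.mem_Ioi] at hy
    have h1 := holder_step hpq hsq1 f hf hy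
    have h2 : (∫⁻ t in Ioi y, f t) ^ p ≤
        (∫⁻ t in Ioi y, φ t) *
          ENNReal.ofReal (y ^ (1 - s * q) / (s * q - 1)) ^ (p / q) := by
      calc (∫⁻ t in Ioi y, f t) ^ p
          ≤ ((∫⁻ t in Ioi y, φ t) ^ (1 / p) *
              ENNReal.ofReal (y ^ (1 - s * q) / (s * q - 1)) ^ (1 / q)) ^ p :=
            ENNReal.rpow_le_rpow h1 hp0.le
        _ = (∫⁻ t in Ioi y, φ t) ^ ((1 / p) * p) *
              ENNReal.ofReal (y ^ (1 - s * q) / (s * q - 1)) ^ ((1 / q) * p) := by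
            rw [ENNReal.mul_rpow_of_nonneg _ _ hp0.le, ← ENNReal.rpow_mul, ← ENNReal.rpow_mul]
        _ = (∫⁻ t in Ioi y, φ t) *
              ENNReal.ofReal (y ^ (1 - s * q) / (s * q - 1)) ^ (p / q) := by
            rw [one_div_mul_cancel hp0.ne', ENNReal.rpow_one, one_div_mul_eq_div]
    have hbase : (0:ℝ) < y ^ (1 - s * q) / (s * q - 1) :=
      div_pos (Real.rpow_pos_of_pos hy _) (by linarith)
    have h3 : ENNReal.ofReal (y ^ (1 - s * q) / (s * q - 1)) ^ (p / q) *
        ENNReal.ofReal (y ^ a) = ENNReal.ofReal (y ^ (v - 1)) * K := by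
      rw [ENNReal.ofReal_rpow_of_pos hbase, ← ENNReal.ofReal_mul (by positivity),
        ← ENNReal.ofReal_mul (by positivity)]
      congr 1
      have e1 : (1 : ℝ) - s * q = -v := by rw [hsq]; ring
      have e2 : s * q - 1 = v := by rw [hsq]; ring
      rw [e1, e2, hdiv, Real.div_rpow (Real.rpow_nonneg hy.le _) hv.le,
        ← Real.rpow_mul hy.le, div_eq_mul_inv, mul_right_comm, ← Real.rpow_add hy]
      have e3 : -v * (p - 1) + a = v - 1 := by nlinarith [hpv]
      rw [e3]
    calc (∫⁻ t in Ioi y, f t) ^ p * ENNReal.ofReal (y ^ a)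
        ≤ ((∫⁻ t in Ioi y, φ t) *
            ENNReal.ofReal (y ^ (1 - s * q) / (s * q - 1)) ^ (p / q)) *
            ENNReal.ofReal (y ^ a) := mul_le_mul_left h2 _
      _ = ((∫⁻ t in Ioi y, φ t) * ENNReal.ofReal (y ^ (v - 1))) * K := by
          rw [mul_assoc, h3, ← mul_assoc]
  have hb : (-1:ℝ) < v - 1 := by linarith
  calc ∫⁻ y in Ioi 0, (∫⁻ t in Ioi y, f t) ^ p * ENNReal.ofReal (y ^ a)
      ≤ ∫⁻ y in Ioi 0, ((∫⁻ t in Ioi y, φ t) * ENNReal.ofReal (y ^ (v - 1))) * K :=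
        lintegral_mono_ae (ae_restrict_of_forall_mem measurableSet_Ioi step1)
    _ = (∫⁻ y in Ioi 0, (∫⁻ t in Ioi y, φ t) * ENNReal.ofReal (y ^ (v - 1))) * K :=
        lintegral_mul_const'' K (by
          have hA : Antitone (fun y : ℝ => ∫⁻ t in Ioi y, φ t) :=
            fun y₁ y₂ h12 => lintegral_mono_set (Ioi_subset_Ioi h12)
          exact (hA.measurable.mul (measurable_ofReal_rpow (v - 1))).aemeasurable)
    _ = (∫⁻ t in Ioi 0, φ t * ENNReal.ofReal (t ^ (v - 1 + 1) / (v - 1 + 1))) * K := by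
        rw [tonelli_step hb φ hφm]
    _ ≤ ENNReal.ofReal ((((a + 1) / p)⁻¹) ^ p) *
        ∫⁻ t in Ioi 0, f t ^ p * ENNReal.ofReal (t ^ (a + p)) := by
        have key : ∀ t ∈ Ioi (0:ℝ), φ t * ENNReal.ofReal (t ^ (v - 1 + 1) / (v - 1 + 1)) =
            (f t ^ p * ENNReal.ofReal (t ^ (a + p))) * ENNReal.ofReal v⁻¹ := by
          intro t ht
          rw [Set.mem_Ioi] at ht
          have hvv : (v - 1 + 1 : ℝ) = v := by ring
          simp only [hφ_def]
          rw [hvv, mul_assoc, mul_assoc]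
          congr 1
          rw [← ENNReal.ofReal_mul (Real.rpow_nonneg ht.le _),
            ← ENNReal.ofReal_mul (Real.rpow_nonneg ht.le _)]
          congr 1
          rw [div_eq_mul_inv, ← mul_assoc, ← Real.rpow_add ht]
          congr 2
          nlinarith [hpv, hsp]
        rw [lintegral_congr_ae (ae_restrict_of_forall_mem measurableSet_Ioi key)]
        rw [show (∫⁻ t in Ioi (0:ℝ), f t ^ p * ENNReal.ofReal (t ^ (a + p)) * ENNReal.ofReal v⁻¹) * K
            = (K * ENNReal.ofReal v⁻¹) * ∫⁻ t in Ioi (0:ℝ), f t ^ p * ENNReal.ofReal (t ^ (a + p)) from by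
          rw [lintegral_mul_const'' (f := fun t => f t ^ p * ENNReal.ofReal (t ^ (a + p))) _ ((hf.pow_const p).mul
            (measurable_ofReal_rpow (a + p))).aemeasurable]; ring]
        apply mul_le_mul_left
        rw [hK_def, ← ENNReal.ofReal_mul (by positivity), ← hv_def]
        apply ENNReal.ofReal_le_ofReal
        rw [Real.inv_rpow hv.le, ← mul_inv, ← Real.rpow_add_one hv.ne',
          show p - 1 + 1 = p from by ring]

lemma tail_finite {p q a : ℝ} (hpq : p.HolderConjugate q) (ha : -1 < a)
    (f : ℝ → ℝ≥0∞) (hf : Measurable f)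
    (hJ : (∫⁻ t in Ioi 0, f t ^ p * ENNReal.ofReal (t ^ (a + p))) ≠ ⊤) :
    (∫⁻ t in Ioi 1, f t) ≠ ⊤ := by
  have hp0 : 0 < p := hpq.pos
  have hq0 : 0 < q := hpq.symm.pos
  set v : ℝ := (a + 1) / p with hv_def
  have hv : 0 < v := div_pos (by linarith) hp0
  have hpv : p * v = a + 1 := by rw [hv_def]; field_simp
  set s : ℝ := (v + 1) / q with hs_def
  have hsq : s * q = v + 1 := div_mul_cancel₀ _ hq0.ne'
  have hsq1 : 1 < s * q := by rw [hsq]; linarith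
  have hsp : s * p = (v + 1) * (p - 1) := by
    rw [hs_def, div_mul_eq_mul_div, mul_div_assoc, hpq.div_conj_eq_sub_one]
  have hsple : s * p ≤ a + p := by nlinarith [hpv, hpq.lt]
  have h1 := holder_step hpq hsq1 f hf (y := 1) one_pos
  have hX : (∫⁻ t in Ioi (1:ℝ), f t ^ p * ENNReal.ofReal (t ^ (s * p))) ≠ ⊤ := by
    refine ne_top_of_le_ne_top hJ (le_trans (lintegral_mono_ae
      (ae_restrict_of_forall_mem measurableSet_Ioi fun t ht => ?_))
      (lintegral_mono_set (Ioi_subset_Ioi zero_le_one)))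
    exact mul_le_mul_right (ENNReal.ofReal_le_ofReal
      (Real.rpow_le_rpow_of_exponent_le (le_of_lt ht) hsple)) _
  refine ne_top_of_le_ne_top ?_ h1
  exact ENNReal.mul_ne_top
    (ENNReal.rpow_ne_top_of_nonneg (by positivity) hX)
    (ENNReal.rpow_ne_top_of_nonneg (by positivity) ENNReal.ofReal_ne_top)

lemma eLpNorm_wm (m : ℝ) {p : ℝ} (hp0 : 0 < p) (w : ℝ → ℝ) :
    eLpNorm w (ENNReal.ofReal p) (wm m) =
      (∫⁻ y in Ioi 0, (‖w y‖₊ : ℝ≥0∞) ^ p * ENNReal.ofReal (y ^ m)) ^ (1 / p) := by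
  rw [eLpNorm_eq_lintegral_rpow_enorm_toReal (by simp [hp0]) ENNReal.ofReal_ne_top,
    ENNReal.toReal_ofReal hp0.le, wm,
    lintegral_withDensity_eq_lintegral_mul_non_measurable _ (measurable_ofReal_rpow m)
      (ae_of_all _ fun y => ENNReal.ofReal_lt_top)]
  congr 1
  exact lintegral_congr fun y => mul_comm _ _

/-- Trace-Hardy inequality at `∞`: if `(m+1)/p > 1-β` and `y^β u' ∈ L^p_m` then the limit
`u_∞ = lim_{y→∞} u(y)` exists and `‖y^{β-1}(u-u_∞)‖ ≤ C ‖y^β u'‖`. -/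
theorem stmt7 (p m β : ℝ) (hp : 1 < p) (h : (m + 1) / p > 1 - β)
    (u u' : ℝ → ℝ) (hderiv : ∀ y, 0 < y → HasDerivAt u (u' y) y)
    (hmem : MemLp (fun y => y ^ β * u' y) (ENNReal.ofReal p) (wm m)) :
    ∃ uInf : ℝ, Tendsto u atTop (𝓝 uInf) ∧
      eLpNorm (fun y => y ^ (β - 1) * (u y - uInf)) (ENNReal.ofReal p) (wm m) ≤
        ENNReal.ofReal |(m + 1) / p - (1 - β)|⁻¹ *
          eLpNorm (fun y => y ^ β * u' y) (ENNReal.ofReal p) (wm m) := by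
  have hp0 : 0 < p := lt_trans one_pos hp
  have hpq : p.HolderConjugate (Real.conjExponent p) := Real.HolderConjugate.conjExponent hp
  set a : ℝ := (β - 1) * p + m with ha_def
  have hmp : (1 - β) * p < m + 1 := (lt_div_iff₀ hp0).mp h
  have ha : (-1:ℝ) < a := by nlinarith
  set v : ℝ := (a + 1) / p with hv_def
  have hv : 0 < v := div_pos (by linarith) hp0
  set g : ℝ → ℝ := deriv u with hg_def
  have hgm : Measurable g := measurable_deriv u
  have hgu : ∀ y : ℝ, 0 < y → g y = u' y := fun y hy => (hderiv y hy).deriv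
  set f : ℝ → ℝ≥0∞ := fun t => (‖g t‖₊ : ℝ≥0∞) with hf_def
  have hfm : Measurable f := hgm.enorm
  set J := ∫⁻ t in Ioi 0, f t ^ p * ENNReal.ofReal (t ^ (a + p)) with hJ_def
  have hRHS : eLpNorm (fun y => y ^ β * u' y) (ENNReal.ofReal p) (wm m) = J ^ (1/p) := by
    rw [eLpNorm_wm m hp0]
    congr 1
    refine lintegral_congr_ae (ae_restrict_of_forall_mem measurableSet_Ioi fun y hy => ?_)
    rw [Set.mem_Ioi] at hy
    show (‖y ^ β * u' y‖₊ : ℝ≥0∞) ^ p * ENNReal.ofReal (y ^ m) =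
      f y ^ p * ENNReal.ofReal (y ^ (a + p))
    have h1 : (‖y ^ β * u' y‖₊ : ℝ≥0∞) = ENNReal.ofReal (y ^ β) * f y := by
      rw [← hgu y hy, ← enorm_eq_nnnorm, Real.enorm_eq_ofReal_abs, abs_mul, ENNReal.ofReal_mul (abs_nonneg _),
        abs_of_pos (Real.rpow_pos_of_pos hy β)]
      simp only [hf_def, ← enorm_eq_nnnorm, Real.enorm_eq_ofReal_abs]
    rw [h1, ENNReal.mul_rpow_of_nonneg _ _ hp0.le,
      ENNReal.ofReal_rpow_of_pos (Real.rpow_pos_of_pos hy β), ← Real.rpow_mul hy.le,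
      mul_comm (ENNReal.ofReal _) (f y ^ p), mul_assoc,
      ← ENNReal.ofReal_mul (by positivity), ← Real.rpow_add hy,
      show β * p + m = a + p from by rw [ha_def]; ring]
  have hJtop : J ≠ ⊤ := by
    have h2 := hmem.2
    rw [hRHS] at h2
    intro hcon
    rw [hcon, ENNReal.top_rpow_of_pos (by positivity : (0:ℝ) < 1/p)] at h2
    exact (lt_irrefl _ h2).elim
  have htail : (∫⁻ t in Ioi 1, f t) ≠ ⊤ := tail_finite hpq ha f hfm hJtop
  have hIntOn : ∀ y : ℝ, (∫⁻ t in Ioi y, f t) ≠ ⊤ → IntegrableOn g (Ioi y) :=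
    fun y hy => ⟨hgm.aestronglyMeasurable, lt_top_iff_ne_top.mpr hy⟩
  have hFTC : ∀ y Y : ℝ, 0 < y → y ≤ Y → IntegrableOn g (Ioi y) →
      u Y - u y = ∫ t in y..Y, g t := by
    intro y Y hy hyY hint
    have hiint : IntervalIntegrable g volume y Y :=
      (intervalIntegrable_iff_integrableOn_Ioc_of_le hyY).mpr
        (hint.mono_set Set.Ioc_subset_Ioi_self)
    have hd : ∀ x ∈ Set.uIcc y Y, HasDerivAt u (g x) x := by
      intro x hx
      rw [Set.uIcc_of_le hyY] at hx
      have hx0 : 0 < x := lt_of_lt_of_le hy hx.1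
      exact (hgu x hx0) ▸ hderiv x hx0
    rw [intervalIntegral.integral_eq_sub_of_hasDerivAt hd hiint]
  have hlim : ∀ y : ℝ, 0 < y → IntegrableOn g (Ioi y) →
      Tendsto u atTop (𝓝 (u y + ∫ t in Ioi y, g t)) := by
    intro y hy hint
    have h1 : Tendsto (fun Y => u y + ∫ t in y..Y, g t) atTop
        (𝓝 (u y + ∫ t in Ioi y, g t)) :=
      tendsto_const_nhds.add (intervalIntegral_tendsto_integral_Ioi y hint tendsto_id)
    refine h1.congr' ?_
    filter_upwards [eventually_ge_atTop y] with Y hY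
    rw [← hFTC y Y hy hY hint]
    ring
  set uInf := u 1 + ∫ t in Ioi 1, g t with huInf_def
  have hTend : Tendsto u atTop (𝓝 uInf) := hlim 1 one_pos (hIntOn 1 htail)
  have hpt : ∀ y : ℝ, 0 < y → (‖u y - uInf‖₊ : ℝ≥0∞) ≤ ∫⁻ t in Ioi y, f t := by
    intro y hy
    by_cases hF : (∫⁻ t in Ioi y, f t) = ⊤
    · rw [hF]; exact le_top
    · have hint' := hIntOn y hF
      have heq : uInf = u y + ∫ t in Ioi y, g t :=
        tendsto_nhds_unique hTend (hlim y hy hint')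
      rw [heq, show u y - (u y + ∫ t in Ioi y, g t) = -(∫ t in Ioi y, g t) from by ring,
        nnnorm_neg]
      exact enorm_integral_le_lintegral_enorm _
  refine ⟨uInf, hTend, ?_⟩
  rw [hRHS]
  have hvm : (m + 1) / p - (1 - β) = v := by
    rw [hv_def, ha_def]; field_simp; ring
  have habs : |(m + 1) / p - (1 - β)|⁻¹ = v⁻¹ := by rw [hvm, abs_of_pos hv]
  calc eLpNorm (fun y => y ^ (β - 1) * (u y - uInf)) (ENNReal.ofReal p) (wm m)
      = (∫⁻ y in Ioi 0, (‖y ^ (β - 1) * (u y - uInf)‖₊ : ℝ≥0∞) ^ p *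
          ENNReal.ofReal (y ^ m)) ^ (1/p) := eLpNorm_wm m hp0 _
    _ ≤ (∫⁻ y in Ioi 0, (∫⁻ t in Ioi y, f t) ^ p * ENNReal.ofReal (y ^ a)) ^ (1/p) := by
        apply ENNReal.rpow_le_rpow _ (by positivity)
        refine lintegral_mono_ae (ae_restrict_of_forall_mem measurableSet_Ioi fun y hy => ?_)
        rw [Set.mem_Ioi] at hy
        have e : (‖y ^ (β - 1) * (u y - uInf)‖₊ : ℝ≥0∞) =
            ENNReal.ofReal (y ^ (β - 1)) * ‖u y - uInf‖₊ := by
          rw [← enorm_eq_nnnorm, Real.enorm_eq_ofReal_abs, abs_mul, ENNReal.ofReal_mul (abs_nonneg _),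
            abs_of_pos (Real.rpow_pos_of_pos hy _), ← enorm_eq_nnnorm, Real.enorm_eq_ofReal_abs]
        calc (‖y ^ (β - 1) * (u y - uInf)‖₊ : ℝ≥0∞) ^ p * ENNReal.ofReal (y ^ m)
            ≤ (ENNReal.ofReal (y ^ (β - 1)) * ∫⁻ t in Ioi y, f t) ^ p *
              ENNReal.ofReal (y ^ m) := by
              gcongr
              · rw [e]
                exact mul_le_mul_right (hpt y hy) _
          _ = (∫⁻ t in Ioi y, f t) ^ p * ENNReal.ofReal (y ^ a) := by
              rw [ENNReal.mul_rpow_of_nonneg _ _ hp0.le,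
                ENNReal.ofReal_rpow_of_pos (Real.rpow_pos_of_pos hy _),
                ← Real.rpow_mul hy.le, mul_comm (ENNReal.ofReal _) _, mul_assoc,
                ← ENNReal.ofReal_mul (by positivity), ← Real.rpow_add hy,
                show (β - 1) * p + m = a from ha_def.symm]
    _ ≤ (ENNReal.ofReal (v⁻¹ ^ p) * J) ^ (1/p) :=
        ENNReal.rpow_le_rpow (hardy_lintegral hpq ha f hfm) (by positivity)
    _ = ENNReal.ofReal v⁻¹ * J ^ (1/p) := by
        rw [ENNReal.mul_rpow_of_nonneg _ _ (by positivity),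
          ← ENNReal.ofReal_rpow_of_pos (by positivity),
          ← ENNReal.rpow_mul, mul_one_div_cancel hp0.ne', ENNReal.rpow_one]
    _ = ENNReal.ofReal |(m + 1) / p - (1 - β)|⁻¹ * J ^ (1/p) := by rw [habs]
end

section
/- Let $1 < p < \infty$, $m \in \mathbb{R}$, $\beta < 2$. There exist $C > 0$ and $\varepsilon_0 > 0$ such that for every $u \in W^{2,p}_{loc}((1,\infty))$ and every $0 < \varepsilon < \varepsilon_0$: $\|y^{\beta/2} u'\|_{L^p((1,\infty); y^m dy)} \le C\left(\varepsilon \|y^\beta u''\|_{L^p((1,\infty); y^m dy)} + \frac{1}{\varepsilon}\|u\|_{L^p((1,\infty); y^m dy)}\right)$. -/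
open MeasureTheory Filter
open scoped ENNReal

/-- The weighted measure `y^m dy` on `(1,∞)`. -/
noncomputable def wm1 (m : ℝ) : Measure ℝ :=
  (volume.restrict (Set.Ioi 1)).withDensity fun y => ENNReal.ofReal (y ^ m)

section helpers
open Set intervalIntegral


lemma meas_ind {f : ℝ → ℝ} {s : Set ℝ} (hs : IsOpen s) (hf : ContinuousOn f s) :
    Measurable (s.indicator f) := by
  classical
  apply measurable_of_isOpen
  intro V hV
  have : s.indicator f ⁻¹' V =
      (s ∩ f ⁻¹' V) ∪ (sᶜ ∩ (if (0:ℝ) ∈ V then Set.univ else ∅)) := by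
    ext x
    by_cases hx : x ∈ s
    · simp [Set.indicator, hx]
    · by_cases h0 : (0:ℝ) ∈ V <;> simp [Set.indicator, hx, h0]
  rw [this]
  exact ((hf.isOpen_inter_preimage hs hV).measurableSet).union
    ((hs.measurableSet.compl).inter (by split <;> simp))


lemma local_real (u u' u'' : ℝ → ℝ)
    (hu : ∀ y, 1 < y → HasDerivAt u (u' y) y)
    (hu' : ∀ y, 1 < y → HasDerivAt u' (u'' y) y)
    {y ℓ : ℝ} (hy : 1 < y) (hℓ : 0 < ℓ)
    (hI : IntegrableOn u'' (Icc y (y + ℓ)) volume) :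
    |u' y| ≤ 18 / ℓ ^ 2 * (∫ t in Icc y (y + ℓ), |u t|) +
      3 * ∫ t in Icc y (y + ℓ), |u'' t| := by
  set I : Set ℝ := Icc y (y + ℓ) with hIdef
  have hsub : I ⊆ Ioi 1 := fun t ht => lt_of_lt_of_le hy ht.1
  have hucont : ContinuousOn u I := fun t ht =>
    ((hu t (hsub ht)).continuousAt).continuousWithinAt
  have hu'cont : ContinuousOn u' I := fun t ht =>
    ((hu' t (hsub ht)).continuousAt).continuousWithinAt
  have huint : IntegrableOn (fun t => |u t|) I volume :=
    (hucont.abs).integrableOn_compact isCompact_Icc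
  have hvint : IntegrableOn (fun t => |u'' t|) I volume := hI.abs
  set J : ℝ := ∫ t in I, |u t| with hJ
  set M : ℝ := ∫ t in I, |u'' t| with hM
  have hM0 : 0 ≤ M := setIntegral_nonneg measurableSet_Icc (fun t _ => abs_nonneg _)
  -- pick minimizers
  have pick : ∀ c d : ℝ, y ≤ c → c ≤ d → d ≤ y + ℓ → (d - c) = ℓ/3 →
      ∃ a ∈ Icc c d, |u a| * (ℓ/3) ≤ J := by
    intro c d hc hcd hd hlen
    have hsub' : Icc c d ⊆ I := Icc_subset_Icc hc hd
    have hne : (Icc c d).Nonempty := ⟨c, le_refl c, hcd⟩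
    obtain ⟨a, ha, hmin⟩ := isCompact_Icc.exists_isMinOn hne
      ((hucont.mono hsub').abs)
    refine ⟨a, ha, ?_⟩
    have h1 : |u a| * (ℓ/3) = ∫ _t in Icc c d, |u a| := by
      rw [setIntegral_const]
      rw [measureReal_def, Real.volume_Icc]
      rw [ENNReal.toReal_ofReal (by linarith [hlen] : (0:ℝ) ≤ d - c)]
      rw [hlen, smul_eq_mul]; ring
    rw [h1]
    calc ∫ _t in Icc c d, |u a| ≤ ∫ t in Icc c d, |u t| := by
          apply setIntegral_mono_on (integrableOn_const (by
            rw [Real.volume_Icc]; exact ENNReal.ofReal_ne_top))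
            (huint.mono_set hsub') measurableSet_Icc
          intro t ht; exact hmin ht
      _ ≤ J := by
          apply setIntegral_mono_set huint
            (Filter.Eventually.of_forall fun t => abs_nonneg _)
            (HasSubset.Subset.eventuallyLE hsub')
  obtain ⟨a, ha, haJ⟩ := pick y (y + ℓ/3) le_rfl (by linarith) (by linarith) (by ring)
  obtain ⟨b, hb, hbJ⟩ := pick (y + 2*ℓ/3) (y + ℓ) (by linarith) (by linarith) le_rfl (by ring)
  have hya : y ≤ a := ha.1
  have hab : a ≤ b := le_trans ha.2 (by linarith [hb.1])
  have hba : ℓ/3 ≤ b - a := by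
    have := ha.2; have := hb.1; linarith
  have hbI : b ≤ y + ℓ := hb.2
  have haI : ∀ s, a ≤ s → s ≤ b → s ∈ I := fun s h1 h2 => ⟨le_trans hya h1, le_trans h2 hbI⟩
  -- FTC for u' on [a,b]
  have hsubab : uIcc a b ⊆ I := by
    rw [uIcc_of_le hab]; exact fun s hs => haI s hs.1 hs.2
  have ftc1 : ∫ s in a..b, u' s = u b - u a := by
    apply integral_eq_sub_of_hasDerivAt (fun x hx => hu x (hsub (hsubab hx)))
    exact ((hu'cont.mono hsubab).intervalIntegrable)
  -- bound |u' s - u' y| ≤ M for s in [a,b]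
  have hbound : ∀ s ∈ uIoc a b, ‖u' s - u' y‖ ≤ M := by
    intro s hs
    rw [uIoc_of_le hab] at hs
    have hsI : s ∈ I := haI s hs.1.le hs.2
    have hys : y ≤ s := hsI.1
    have ftc2 : ∫ t in y..s, u'' t = u' s - u' y := by
      apply integral_eq_sub_of_hasDerivAt
      · intro x hx
        rw [uIcc_of_le hys] at hx
        exact hu' x (lt_of_lt_of_le hy hx.1)
      · apply IntegrableOn.intervalIntegrable
        rw [uIcc_of_le hys]
        exact hI.mono_set (Icc_subset_Icc le_rfl hsI.2)
    rw [← ftc2, Real.norm_eq_abs]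
    calc |∫ t in y..s, u'' t| ≤ ∫ t in y..s, |u'' t| :=
          intervalIntegral.abs_integral_le_integral_abs hys
      _ = ∫ t in Ioc y s, |u'' t| := intervalIntegral.integral_of_le hys
      _ ≤ M := setIntegral_mono_set hvint
            (Filter.Eventually.of_forall fun t => abs_nonneg _)
            (HasSubset.Subset.eventuallyLE (fun t ht =>
              ⟨ht.1.le, ht.2.trans hsI.2⟩))
  -- combine
  have hiu' : IntervalIntegrable u' volume a b := (hu'cont.mono hsubab).intervalIntegrable
  have key : |(u b - u a) - (b - a) * u' y| ≤ M * |b - a| := by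
    have h := intervalIntegral.norm_integral_le_of_norm_le_const hbound
    rw [intervalIntegral.integral_sub hiu' intervalIntegrable_const, ftc1,
      intervalIntegral.integral_const] at h
    simpa [Real.norm_eq_abs, smul_eq_mul] using h
  rw [abs_of_nonneg (by linarith : (0:ℝ) ≤ b - a)] at key
  have htri : (b - a) * |u' y| ≤ |u a| + |u b| + (b - a) * M := by
    have h1 : |(b - a) * u' y| ≤ |u b - u a| + |(u b - u a) - (b - a) * u' y| := by
      have := abs_sub_abs_le_abs_sub (u b - u a) ((u b - u a) - (b - a) * u' y)
      have h2 := abs_sub (u b - u a) ((u b - u a) - (b - a) * u' y)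
      calc |(b - a) * u' y| = |(u b - u a) - ((u b - u a) - (b - a) * u' y)| := by ring_nf
        _ ≤ |u b - u a| + |(u b - u a) - (b - a) * u' y| := abs_sub _ _
    have h3 : |u b - u a| ≤ |u a| + |u b| := by
      have := abs_add_le (u b) (-(u a))
      simpa [sub_eq_add_neg, abs_neg, add_comm] using this
    rw [abs_mul, abs_of_nonneg (by linarith : (0:ℝ) ≤ b - a)] at h1
    linarith
  have hmain : ℓ^2 * |u' y| ≤ 18 * J + 3 * ℓ^2 * M := by
    have e1 : (ℓ/3) * |u' y| ≤ (b - a) * |u' y| :=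
      mul_le_mul_of_nonneg_right hba (abs_nonneg _)
    have e2 : (b - a) * M ≤ ℓ * M := mul_le_mul_of_nonneg_right (by linarith) hM0
    have e3 : |u a| * ℓ ≤ 3 * J := by linarith
    have e4 : |u b| * ℓ ≤ 3 * J := by linarith
    nlinarith [abs_nonneg (u a), abs_nonneg (u b), abs_nonneg (u' y)]
  have hℓ2 : (0:ℝ) < ℓ^2 := by positivity
  have hfin : |u' y| ≤ (18 * J + 3 * ℓ^2 * M)/ℓ^2 := by
    rw [le_div_iff₀ hℓ2]; linarith
  calc |u' y| ≤ (18 * J + 3 * ℓ^2 * M)/ℓ^2 := hfin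
    _ = 18 / ℓ^2 * J + 3 * M := by field_simp

lemma local_ennreal (u u' u'' : ℝ → ℝ)
    (hu : ∀ y, 1 < y → HasDerivAt u (u' y) y)
    (hu' : ∀ y, 1 < y → HasDerivAt u' (u'' y) y)
    {y ℓ : ℝ} (hy : 1 < y) (hℓ : 0 < ℓ) :
    (‖u' y‖₊ : ℝ≥0∞) ≤ ENNReal.ofReal (18 / ℓ ^ 2) * (∫⁻ t in Icc y (y + ℓ), ‖u t‖₊) +
      3 * ∫⁻ t in Icc y (y + ℓ), ‖u'' t‖₊ := by
  by_cases htop : (∫⁻ t in Icc y (y + ℓ), (‖u'' t‖₊ : ℝ≥0∞)) = ⊤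
  · rw [htop]
    simp [ENNReal.mul_top]
  · have hsub : Icc y (y + ℓ) ⊆ Ioi 1 := fun t ht => lt_of_lt_of_le hy ht.1
    have hmeas : AEStronglyMeasurable u'' (volume.restrict (Icc y (y + ℓ))) := by
      apply ((measurable_deriv u').aestronglyMeasurable).congr
      filter_upwards [ae_restrict_mem measurableSet_Icc] with t ht
      exact (hu' t (hsub ht)).deriv
    have hint : IntegrableOn u'' (Icc y (y + ℓ)) volume := by
      refine ⟨hmeas, ?_⟩
      rw [HasFiniteIntegral, lt_top_iff_ne_top]
      exact htop
    have hucont : ContinuousOn u (Icc y (y + ℓ)) := fun t ht =>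
      ((hu t (hsub ht)).continuousAt).continuousWithinAt
    have huint : IntegrableOn u (Icc y (y + ℓ)) volume :=
      hucont.integrableOn_compact isCompact_Icc
    have h := local_real u u' u'' hu hu' hy hℓ hint
    have e1 : ENNReal.ofReal (∫ t in Icc y (y + ℓ), |u t|) = ∫⁻ t in Icc y (y + ℓ), ‖u t‖₊ := by
      rw [ofReal_integral_eq_lintegral_ofReal huint.abs
        (Filter.Eventually.of_forall fun t => abs_nonneg _)]
      refine lintegral_congr fun t => ?_
      rw [← Real.norm_eq_abs, ofReal_norm, enorm_eq_nnnorm]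
    have e2 : ENNReal.ofReal (∫ t in Icc y (y + ℓ), |u'' t|) = ∫⁻ t in Icc y (y + ℓ), ‖u'' t‖₊ := by
      rw [ofReal_integral_eq_lintegral_ofReal hint.abs
        (Filter.Eventually.of_forall fun t => abs_nonneg _)]
      refine lintegral_congr fun t => ?_
      rw [← Real.norm_eq_abs, ofReal_norm, enorm_eq_nnnorm]
    calc (‖u' y‖₊ : ℝ≥0∞) = ENNReal.ofReal |u' y| := by
          rw [← Real.norm_eq_abs, ofReal_norm, enorm_eq_nnnorm]
      _ ≤ ENNReal.ofReal (18 / ℓ ^ 2 * (∫ t in Icc y (y + ℓ), |u t|) +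
            3 * ∫ t in Icc y (y + ℓ), |u'' t|) := ENNReal.ofReal_le_ofReal h
      _ ≤ _ := by
          rw [ENNReal.ofReal_add (by positivity) (by positivity),
            ENNReal.ofReal_mul (by positivity), ENNReal.ofReal_mul (by norm_num), e1, e2]
          norm_num


lemma holder_window {f : ℝ → ℝ≥0∞} {s : Set ℝ} (hs : MeasurableSet s)
    (hf : AEMeasurable f (volume.restrict s)) {p : ℝ} (hp : 1 < p) :
    (∫⁻ t in s, f t) ^ p ≤ (volume s) ^ (p - 1) * ∫⁻ t in s, (f t) ^ p := by
  have hpq : p.HolderConjugate (p / (p - 1)) := Real.HolderConjugate.conjExponent hp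
  have h := ENNReal.lintegral_mul_le_Lp_mul_Lq (volume.restrict s) hpq hf aemeasurable_const
    (g := fun _ => 1)
  simp only [mul_one, ENNReal.one_rpow, lintegral_const, Measure.restrict_apply,
    MeasurableSet.univ, Set.univ_inter] at h
  have hp0 : (0:ℝ) ≤ p := by linarith
  have h2 := ENNReal.rpow_le_rpow h hp0
  rw [ENNReal.mul_rpow_of_nonneg _ _ hp0, ← ENNReal.rpow_mul, ← ENNReal.rpow_mul,
    one_div_mul_cancel (by linarith : p ≠ 0), ENNReal.rpow_one] at h2
  simp only [Pi.mul_apply, mul_one, one_mul, one_div] at h2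
  calc (∫⁻ t in s, f t) ^ p ≤ (∫⁻ t in s, f t ^ p) * (volume s) ^ ((p/(p-1))⁻¹ * p) := h2
    _ = (volume s) ^ (p - 1) * ∫⁻ t in s, f t ^ p := by
        rw [mul_comm]
        congr 1
        congr 1
        field_simp
lemma two_rpow_helper {x y : ℝ≥0∞} {p : ℝ} (hp : 1 ≤ p) :
    (x + y) ^ p ≤ ENNReal.ofReal (2 ^ p) * (x ^ p + y ^ p) := by
  have hp0 : (0:ℝ) ≤ p := by linarith
  have h1 : x + y ≤ 2 * (x ⊔ y) := by
    rw [two_mul]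
    exact add_le_add le_sup_left le_sup_right
  calc (x + y) ^ p ≤ (2 * (x ⊔ y)) ^ p := ENNReal.rpow_le_rpow h1 hp0
    _ = 2 ^ p * (x ⊔ y) ^ p := ENNReal.mul_rpow_of_nonneg _ _ hp0
    _ ≤ ENNReal.ofReal (2 ^ p) * (x ^ p + y ^ p) := by
        apply mul_le_mul'
        · rw [← ENNReal.ofReal_rpow_of_pos (by norm_num)]
          norm_num
        · rcases le_total x y with h | h
          · rw [sup_eq_right.2 h]; exact le_add_self
          · rw [sup_eq_left.2 h]; exact le_self_add


lemma coeff1 {y ε p β m : ℝ} (hy : 1 < y) (hε : 0 < ε) (hp : 0 < p) :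
    y ^ (m + p * (β/2)) * (2 ^ p * ((18 / (ε * y ^ (β/2)) ^ 2) ^ p *
      (ε * y ^ (β/2)) ^ (p - 1)))
    = 36 ^ p * ε ^ (-(p+1)) * y ^ (m - β/2) := by
  have hy0 : (0:ℝ) < y := lt_trans one_pos hy
  have hyb : (0:ℝ) < y ^ (β/2) := Real.rpow_pos_of_pos hy0 _
  set l : ℝ := ε * y ^ (β/2) with hl
  have hl0 : 0 < l := mul_pos hε hyb
  have e1 : 18 / l ^ 2 = 18 * l ^ ((-2 : ℝ)) := by
    rw [Real.rpow_neg hl0.le, ← Real.rpow_natCast l 2]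
    norm_num
    rw [div_eq_mul_inv]
  have e2 : (18 / l ^ 2) ^ p * l ^ (p - 1) = 18 ^ p * l ^ (-(p+1)) := by
    rw [e1, Real.mul_rpow (by norm_num) (Real.rpow_nonneg hl0.le _),
      ← Real.rpow_mul hl0.le, mul_assoc, ← Real.rpow_add hl0]
    congr 1
    ring
  have e3 : l ^ (-(p+1)) = ε ^ (-(p+1)) * y ^ ((β/2) * (-(p+1))) := by
    rw [hl, Real.mul_rpow hε.le hyb.le, ← Real.rpow_mul hy0.le]
  have e4 : (2:ℝ) ^ p * 18 ^ p = 36 ^ p := by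
    rw [← Real.mul_rpow (by norm_num) (by norm_num)]
    norm_num
  rw [e2, e3, ← mul_assoc,
    show y ^ (m + p * (β/2)) * (2:ℝ) ^ p * (18 ^ p * (ε ^ (-(p+1)) * y ^ ((β/2) * (-(p+1)))))
      = (2 ^ p * 18 ^ p) * ε ^ (-(p+1)) * (y ^ (m + p * (β/2)) * y ^ ((β/2) * (-(p+1)))) from
      by ring,
    e4, ← Real.rpow_add hy0]
  congr 2
  ring

lemma coeff2 {y ε p β m : ℝ} (hy : 1 < y) (hε : 0 < ε) (hp : 0 < p) :
    y ^ (m + p * (β/2)) * (2 ^ p * (3 ^ p * (ε * y ^ (β/2)) ^ (p - 1)))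
    = 6 ^ p * ε ^ (p - 1) * y ^ (m + (2*p-1) * (β/2)) := by
  have hy0 : (0:ℝ) < y := lt_trans one_pos hy
  have hyb : (0:ℝ) < y ^ (β/2) := Real.rpow_pos_of_pos hy0 _
  have e3 : (ε * y ^ (β/2)) ^ (p-1) = ε ^ (p-1) * y ^ ((β/2) * (p-1)) := by
    rw [Real.mul_rpow hε.le hyb.le, ← Real.rpow_mul hy0.le]
  have e4 : (2:ℝ) ^ p * 3 ^ p = 6 ^ p := by
    rw [← Real.mul_rpow (by norm_num) (by norm_num)]
    norm_num
  rw [e3, show y ^ (m + p * (β/2)) * (2 ^ p * (3 ^ p * (ε ^ (p-1) * y ^ ((β/2) * (p-1)))))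
      = (2 ^ p * 3 ^ p) * ε ^ (p-1) * (y ^ (m + p * (β/2)) * y ^ ((β/2) * (p-1))) by ring,
    e4, ← Real.rpow_add hy0]
  congr 2
  ring


lemma base_pow_bound {t y r : ℝ} (ht : 0 < t) (hy : 0 < y) (h1 : t/2 ≤ y) (h2 : y ≤ t) :
    y ^ r ≤ 2 ^ |r| * t ^ r := by
  rcases le_or_gt 0 r with hr | hr
  · calc y ^ r ≤ t ^ r := Real.rpow_le_rpow hy.le h2 hr
      _ ≤ 2 ^ |r| * t ^ r := by
        nlinarith [Real.one_le_rpow (by norm_num : (1:ℝ) ≤ 2) (abs_nonneg r),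
          Real.rpow_nonneg ht.le r]
  · have h3 : y ^ r ≤ (t/2) ^ r :=
      Real.rpow_le_rpow_of_nonpos (by linarith) h1 hr.le
    have h4 : (t/2) ^ r = 2 ^ |r| * t ^ r := by
      rw [abs_of_neg hr, div_eq_mul_inv, Real.mul_rpow ht.le (by norm_num),
        Real.inv_rpow (by norm_num : (0:ℝ) ≤ 2), ← Real.rpow_neg (by norm_num : (0:ℝ) ≤ 2)]
      ring
    linarith
lemma swap_bound {β ε : ℝ} (hβ : β < 2) (hε : 0 < ε) (hε2 : ε ≤ 1/2)
    {G : ℝ → ℝ≥0∞} (hG : Measurable G) (hG' : ∀ t, G t ≠ ⊤) {r c : ℝ} (hc : 0 ≤ c) :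
    (∫⁻ y in Ioi 1, ENNReal.ofReal (c * y ^ r) * ∫⁻ t in Icc y (y + ε * y ^ (β/2)), G t) ≤
      ENNReal.ofReal (c * 2 ^ (|r| + |β/2|) * ε) *
        ∫⁻ t in Ioi 1, ENNReal.ofReal (t ^ (r + β/2)) * G t := by
  classical
  set S : Set (ℝ × ℝ) := {z | z.1 ≤ z.2 ∧ z.2 ≤ z.1 + ε * z.1 ^ (β/2)} with hS
  have hSmeas : MeasurableSet S := by
    apply (measurableSet_le measurable_fst measurable_snd).inter
    apply measurableSet_le measurable_snd
    have : Measurable fun z : ℝ × ℝ => z.1 + ε * z.1 ^ (β/2) := by fun_prop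
    exact this
  have hF : Measurable (Function.uncurry fun y t =>
      ENNReal.ofReal (c * y ^ r) * S.indicator (fun _ => (1:ℝ≥0∞)) (y, t) * G t) := by
    apply Measurable.mul
    apply Measurable.mul
    · have : Measurable fun z : ℝ × ℝ => ENNReal.ofReal (c * z.1 ^ r) := by fun_prop
      exact this.comp measurable_id
    · exact (measurable_one.indicator hSmeas)
    · exact hG.comp measurable_snd
  -- step 1: rewrite inner integral
  have step1 : ∀ y : ℝ, (ENNReal.ofReal (c * y ^ r) * ∫⁻ t in Icc y (y + ε * y ^ (β/2)), G t)
      = ∫⁻ t, ENNReal.ofReal (c * y ^ r) * S.indicator (fun _ => (1:ℝ≥0∞)) (y, t) * G t := by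
    intro y
    rw [← lintegral_indicator measurableSet_Icc, ← lintegral_const_mul' _ _ ENNReal.ofReal_ne_top]
    refine lintegral_congr fun t => ?_
    by_cases ht : t ∈ Icc y (y + ε * y ^ (β/2))
    · have hts : (y, t) ∈ S := ⟨ht.1, ht.2⟩
      rw [Set.indicator_of_mem ht, Set.indicator_of_mem hts]
      ring
    · have hts : (y, t) ∉ S := fun h => ht ⟨h.1, h.2⟩
      rw [Set.indicator_of_notMem ht, Set.indicator_of_notMem hts]
      simp
  calc (∫⁻ y in Ioi 1, ENNReal.ofReal (c * y ^ r) * ∫⁻ t in Icc y (y + ε * y ^ (β/2)), G t)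
      = ∫⁻ y in Ioi 1, ∫⁻ t,
          ENNReal.ofReal (c * y ^ r) * S.indicator (fun _ => (1:ℝ≥0∞)) (y, t) * G t := by
        exact lintegral_congr fun y => step1 y
    _ = ∫⁻ t, ∫⁻ y in Ioi 1,
          ENNReal.ofReal (c * y ^ r) * S.indicator (fun _ => (1:ℝ≥0∞)) (y, t) * G t := by
        exact lintegral_lintegral_swap hF.aemeasurable
    _ ≤ ∫⁻ t, (Ioi 1).indicator
          (fun t => ENNReal.ofReal (c * 2 ^ (|r| + |β/2|) * ε * t ^ (r + β/2))) t * G t := by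
        apply lintegral_mono
        intro t
        dsimp only
        rw [lintegral_mul_const' _ _ (hG' t)]
        apply mul_le_mul_left
        -- the y-integral bound
        set T : Set ℝ := {y | y ≤ t ∧ t ≤ y + ε * y ^ (β/2)} with hT
        have hTmeas : MeasurableSet T := by
          have : T = {y : ℝ | y ≤ t} ∩ {y : ℝ | t ≤ y + ε * y ^ (β/2)} := by
            ext y; simp [hT, mem_setOf_eq]
          rw [this]
          exact (measurableSet_le measurable_id measurable_const).inter
            (measurableSet_le measurable_const (by fun_prop))
        have e1 : (∫⁻ y in Ioi 1, ENNReal.ofReal (c * y ^ r)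
            * S.indicator (fun _ => (1:ℝ≥0∞)) (y, t))
            = ∫⁻ y in T ∩ Ioi 1, ENNReal.ofReal (c * y ^ r) := by
          rw [← Measure.restrict_restrict hTmeas, ← lintegral_indicator hTmeas]
          refine lintegral_congr fun y => ?_
          by_cases hy : y ∈ T
          · rw [Set.indicator_of_mem hy, Set.indicator_of_mem (show (y,t) ∈ S from ⟨hy.1, hy.2⟩)]
            ring
          · rw [Set.indicator_of_notMem hy,
              Set.indicator_of_notMem (show (y,t) ∉ S from fun h => hy ⟨h.1, h.2⟩)]
            simp
        rw [e1]
        rcases le_or_gt t 1 with ht1 | ht1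
        · have : T ∩ Ioi 1 = ∅ := by
            ext y; simp only [mem_inter_iff, mem_Ioi, mem_empty_iff_false, iff_false, hT,
              mem_setOf_eq, not_and]
            intro h1 h2
            linarith [h1.1]
          rw [this]
          simp
        · rw [Set.indicator_of_mem (mem_Ioi.2 ht1)]
          have ht0 : (0:ℝ) < t := by linarith
          -- geometry facts for y ∈ T ∩ Ioi 1
          have geo : ∀ y ∈ T ∩ Ioi 1, t/2 ≤ y ∧ y ≤ t := by
            rintro y ⟨⟨hyt, hty⟩, hy1⟩
            have hy1' : (1:ℝ) < y := hy1
            have hpow : y ^ (β/2) ≤ y := by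
              calc y ^ (β/2) ≤ y ^ (1:ℝ) :=
                Real.rpow_le_rpow_of_exponent_le hy1'.le (by linarith)
                _ = y := Real.rpow_one y
            have : t ≤ y + ε * y := by nlinarith [Real.rpow_nonneg (le_of_lt (lt_trans one_pos hy1')) (β/2)]
            constructor
            · nlinarith
            · exact hyt
          have hsubIcc : T ∩ Ioi 1 ⊆ Icc (t - ε * 2 ^ |β/2| * t ^ (β/2)) t := by
            rintro y hy
            obtain ⟨hg1, hg2⟩ := geo y hy
            obtain ⟨⟨hyt, hty⟩, hy1⟩ := hy
            have hy0 : (0:ℝ) < y := lt_trans one_pos hy1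
            have hb := base_pow_bound ht0 hy0 hg1 hg2 (r := β/2)
            constructor
            · have : t - y ≤ ε * y ^ (β/2) := by linarith
              nlinarith
            · exact hg2
          calc ∫⁻ y in T ∩ Ioi 1, ENNReal.ofReal (c * y ^ r)
              ≤ ∫⁻ _y in T ∩ Ioi 1, ENNReal.ofReal (c * (2 ^ |r| * t ^ r)) := by
                apply setLIntegral_mono' (hTmeas.inter measurableSet_Ioi)
                intro y hy
                apply ENNReal.ofReal_le_ofReal
                apply mul_le_mul_of_nonneg_left _ hc
                obtain ⟨hg1, hg2⟩ := geo y hy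
                exact base_pow_bound ht0 (lt_trans one_pos hy.2) hg1 hg2
            _ = ENNReal.ofReal (c * (2 ^ |r| * t ^ r)) * volume (T ∩ Ioi 1) := by
                rw [setLIntegral_const]
            _ ≤ ENNReal.ofReal (c * (2 ^ |r| * t ^ r)) *
                  ENNReal.ofReal (ε * 2 ^ |β/2| * t ^ (β/2)) := by
                apply mul_le_mul_right
                calc volume (T ∩ Ioi 1) ≤ volume (Icc (t - ε * 2 ^ |β/2| * t ^ (β/2)) t) :=
                      measure_mono hsubIcc
                  _ = ENNReal.ofReal (ε * 2 ^ |β/2| * t ^ (β/2)) := by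
                      rw [Real.volume_Icc]; ring_nf
            _ = ENNReal.ofReal (c * 2 ^ (|r| + |β/2|) * ε * t ^ (r + β/2)) := by
                rw [← ENNReal.ofReal_mul (by positivity)]
                congr 1
                rw [Real.rpow_add ht0, Real.rpow_add (by norm_num : (0:ℝ) < 2)]
                ring
    _ = ∫⁻ t in Ioi 1, ENNReal.ofReal (c * 2 ^ (|r| + |β/2|) * ε * t ^ (r + β/2)) * G t := by
        rw [← lintegral_indicator measurableSet_Ioi]
        refine lintegral_congr fun t => ?_
        by_cases ht : t ∈ Ioi 1
        · rw [Set.indicator_of_mem ht, Set.indicator_of_mem ht]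
        · rw [Set.indicator_of_notMem ht, Set.indicator_of_notMem ht, zero_mul]
    _ = ENNReal.ofReal (c * 2 ^ (|r| + |β/2|) * ε) *
          ∫⁻ t in Ioi 1, ENNReal.ofReal (t ^ (r + β/2)) * G t := by
        rw [← lintegral_const_mul' _ _ ENNReal.ofReal_ne_top]
        refine setLIntegral_congr_fun_ae measurableSet_Ioi (Filter.Eventually.of_forall
          fun t ht => ?_)
        have ht0 : (0:ℝ) < t := lt_trans one_pos ht
        rw [← mul_assoc, ← ENNReal.ofReal_mul (by positivity)]
    _ ≤ _ := le_rfl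

lemma meas_window {β ε : ℝ} {H : ℝ → ℝ≥0∞} (hH : Measurable H) :
    Measurable fun y : ℝ => ∫⁻ t in Icc y (y + ε * y ^ (β/2)), H t := by
  classical
  set S : Set (ℝ × ℝ) := {z | z.1 ≤ z.2 ∧ z.2 ≤ z.1 + ε * z.1 ^ (β/2)} with hS
  have hSmeas : MeasurableSet S := by
    apply (measurableSet_le measurable_fst measurable_snd).inter
    apply measurableSet_le measurable_snd
    have : Measurable fun z : ℝ × ℝ => z.1 + ε * z.1 ^ (β/2) := by fun_prop
    exact this
  have key : ∀ y : ℝ, (∫⁻ t in Icc y (y + ε * y ^ (β/2)), H t)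
      = ∫⁻ t, S.indicator (fun _ => (1:ℝ≥0∞)) (y, t) * H t := by
    intro y
    rw [← lintegral_indicator measurableSet_Icc]
    refine lintegral_congr fun t => ?_
    by_cases ht : t ∈ Icc y (y + ε * y ^ (β/2))
    · rw [Set.indicator_of_mem ht, Set.indicator_of_mem (show (y,t) ∈ S from ⟨ht.1, ht.2⟩),
        one_mul]
    · rw [Set.indicator_of_notMem ht,
        Set.indicator_of_notMem (show (y,t) ∉ S from fun h => ht ⟨h.1, h.2⟩), zero_mul]
  simp only [key]
  apply Measurable.lintegral_prod_right
  exact ((measurable_one.indicator hSmeas)).mul (hH.comp measurable_snd)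

end helpers

section main
open Set

/-- Weighted interpolation inequality away from the origin (`β < 2`):
`‖y^{β/2} u'‖_{L^p((1,∞);y^m dy)} ≤ C (ε ‖y^β u''‖ + ε⁻¹ ‖u‖)` for `0 < ε < ε₀`. -/
theorem stmt11 (p m β : ℝ) (hp : 1 < p) (hβ : β < 2) :
    ∃ C > (0 : ℝ), ∃ ε₀ > (0 : ℝ), ∀ u u' u'' : ℝ → ℝ,
      (∀ y, 1 < y → HasDerivAt u (u' y) y) →
      (∀ y, 1 < y → HasDerivAt u' (u'' y) y) →
      ∀ ε : ℝ, 0 < ε → ε < ε₀ →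
        eLpNorm (fun y => y ^ (β / 2) * u' y) (ENNReal.ofReal p) (wm1 m) ≤
          ENNReal.ofReal C *
            (ENNReal.ofReal ε *
                eLpNorm (fun y => y ^ β * u'' y) (ENNReal.ofReal p) (wm1 m)
              + ENNReal.ofReal (1 / ε) * eLpNorm u (ENNReal.ofReal p) (wm1 m)) := by
  have hp0 : (0:ℝ) < p := lt_trans one_pos hp
  set K1 : ℝ := 2 ^ (|m - β/2| + |β/2|) with hK1
  set K2 : ℝ := 2 ^ (|m + (2*p-1) * (β/2)| + |β/2|) with hK2
  have hK10 : 0 < K1 := Real.rpow_pos_of_pos (by norm_num) _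
  have hK20 : 0 < K2 := Real.rpow_pos_of_pos (by norm_num) _
  set D : ℝ := 36 ^ p * K1 + 6 ^ p * K2 with hD
  have hD0 : 0 < D := by positivity
  refine ⟨D ^ (1/p), Real.rpow_pos_of_pos hD0 _, 1/2, by norm_num, ?_⟩
  intro u u' u'' hu hu' ε hε hε'
  have hε2 : ε ≤ 1/2 := le_of_lt hε'
  set P : ℝ≥0∞ := ENNReal.ofReal p with hP
  have hPne : P ≠ 0 := by
    simp only [hP, ne_eq, ENNReal.ofReal_eq_zero, not_le]
    exact hp0
  have hPtop : P ≠ ⊤ := ENNReal.ofReal_ne_top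
  have hPto : P.toReal = p := ENNReal.toReal_ofReal hp0.le
  have norm_rw : ∀ f : ℝ → ℝ, eLpNorm f P (wm1 m)
      = (∫⁻ y in Ioi 1, ENNReal.ofReal (y ^ m) * (‖f y‖₊ : ℝ≥0∞) ^ p) ^ (1/p) := by
    intro f
    rw [eLpNorm_eq_lintegral_rpow_enorm hPne hPtop, hPto, wm1,
      lintegral_withDensity_eq_lintegral_mul_non_measurable _ (by fun_prop)
        (Filter.Eventually.of_forall fun y => ENNReal.ofReal_lt_top)]
    rfl
  -- measurable stand-ins
  have hucont : ContinuousOn u (Ioi 1) := fun t ht => (hu t ht).continuousAt.continuousWithinAt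
  set U : ℝ → ℝ := (Ioi 1).indicator u with hUdef
  have hUmeas : Measurable U := meas_ind isOpen_Ioi hucont
  set V : ℝ → ℝ := deriv u' with hVdef
  have hVmeas : Measurable V := measurable_deriv u'
  have hUeq : ∀ t ∈ Ioi 1, U t = u t := fun t ht => Set.indicator_of_mem ht u
  have hVeq : ∀ t ∈ Ioi 1, V t = u'' t := fun t ht => (hu' t ht).deriv
  set Gu : ℝ → ℝ≥0∞ := fun t => (‖U t‖₊ : ℝ≥0∞) ^ p with hGu
  set Gv : ℝ → ℝ≥0∞ := fun t => (‖V t‖₊ : ℝ≥0∞) ^ p with hGv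
  have hGum : Measurable Gu := (hUmeas.nnnorm.coe_nnreal_ennreal).pow_const _
  have hGvm : Measurable Gv := (hVmeas.nnnorm.coe_nnreal_ennreal).pow_const _
  have hGu' : ∀ t, Gu t ≠ ⊤ :=
    fun t => ENNReal.rpow_ne_top_of_nonneg hp0.le ENNReal.coe_ne_top
  have hGv' : ∀ t, Gv t ≠ ⊤ :=
    fun t => ENNReal.rpow_ne_top_of_nonneg hp0.le ENNReal.coe_ne_top
  set X : ℝ≥0∞ := ∫⁻ y in Ioi 1, ENNReal.ofReal (y ^ (m + p * (β/2))) * (‖u' y‖₊ : ℝ≥0∞) ^ p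
    with hX
  set A : ℝ≥0∞ := ∫⁻ t in Ioi 1, ENNReal.ofReal (t ^ (m + p * β)) * Gv t with hA
  set B : ℝ≥0∞ := ∫⁻ t in Ioi 1, ENNReal.ofReal (t ^ m) * Gu t with hB
  -- identifications of the three norms
  have hid1 : eLpNorm (fun y => y ^ (β / 2) * u' y) P (wm1 m) = X ^ (1/p) := by
    rw [norm_rw]
    congr 1
    refine setLIntegral_congr_fun_ae measurableSet_Ioi (Filter.Eventually.of_forall
      fun y hy => ?_)
    have hy0 : (0:ℝ) < y := lt_trans one_pos hy
    have hyb : (0:ℝ) < y ^ (β/2) := Real.rpow_pos_of_pos hy0 _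
    rw [nnnorm_mul, ENNReal.coe_mul, ENNReal.mul_rpow_of_nonneg _ _ hp0.le, ← mul_assoc]
    congr 1
    rw [← enorm_eq_nnnorm, ← ofReal_norm, Real.norm_eq_abs, abs_of_nonneg hyb.le,
      ENNReal.ofReal_rpow_of_pos hyb, ← ENNReal.ofReal_mul (by positivity),
      ← Real.rpow_mul hy0.le, ← Real.rpow_add hy0]
    congr 2
    ring
  have hid2 : eLpNorm (fun y => y ^ β * u'' y) P (wm1 m) = A ^ (1/p) := by
    rw [norm_rw]
    congr 1
    refine setLIntegral_congr_fun_ae measurableSet_Ioi (Filter.Eventually.of_forall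
      fun y hy => ?_)
    have hy0 : (0:ℝ) < y := lt_trans one_pos hy
    have hyb : (0:ℝ) < y ^ β := Real.rpow_pos_of_pos hy0 _
    rw [nnnorm_mul, ENNReal.coe_mul, ENNReal.mul_rpow_of_nonneg _ _ hp0.le, ← mul_assoc,
      hGv]
    simp only
    rw [hVeq y hy, ← enorm_eq_nnnorm (y ^ β), ← ofReal_norm, Real.norm_eq_abs,
      abs_of_nonneg hyb.le, ENNReal.ofReal_rpow_of_pos hyb,
      ← ENNReal.ofReal_mul (by positivity), ← Real.rpow_mul hy0.le, ← Real.rpow_add hy0]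
    congr 2
    ring
  have hid3 : eLpNorm u P (wm1 m) = B ^ (1/p) := by
    rw [norm_rw]
    congr 1
    refine setLIntegral_congr_fun_ae measurableSet_Ioi (Filter.Eventually.of_forall
      fun y hy => ?_)
    rw [hGu]
    simp only
    rw [hUeq y hy]
  -- pointwise key bound
  have key : ∀ y ∈ Ioi (1:ℝ),
      ENNReal.ofReal (y ^ (m + p * (β/2))) * (‖u' y‖₊ : ℝ≥0∞) ^ p
      ≤ ENNReal.ofReal ((36 ^ p * ε ^ (-(p+1))) * y ^ (m - β/2)) *
          (∫⁻ t in Icc y (y + ε * y ^ (β/2)), Gu t)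
        + ENNReal.ofReal ((6 ^ p * ε ^ (p-1)) * y ^ (m + (2*p-1) * (β/2))) *
          (∫⁻ t in Icc y (y + ε * y ^ (β/2)), Gv t) := by
    intro y hy
    have hy1 : (1:ℝ) < y := hy
    have hy0 : (0:ℝ) < y := lt_trans one_pos hy1
    set l : ℝ := ε * y ^ (β/2) with hldef
    have hl0 : 0 < l := mul_pos hε (Real.rpow_pos_of_pos hy0 _)
    have hIsub : Icc y (y + l) ⊆ Ioi 1 := fun t ht => lt_of_lt_of_le hy1 ht.1
    have h0 : (‖u' y‖₊ : ℝ≥0∞) ≤ ENNReal.ofReal (18 / l ^ 2) *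
        (∫⁻ t in Icc y (y + l), (‖U t‖₊ : ℝ≥0∞)) +
        3 * ∫⁻ t in Icc y (y + l), (‖V t‖₊ : ℝ≥0∞) := by
      have h := local_ennreal u u' u'' hu hu' hy1 hl0
      have eU : (∫⁻ t in Icc y (y + l), (‖u t‖₊ : ℝ≥0∞))
          = ∫⁻ t in Icc y (y + l), (‖U t‖₊ : ℝ≥0∞) :=
        setLIntegral_congr_fun_ae measurableSet_Icc (Filter.Eventually.of_forall
          fun t ht => by rw [hUeq t (hIsub ht)])
      have eV : (∫⁻ t in Icc y (y + l), (‖u'' t‖₊ : ℝ≥0∞))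
          = ∫⁻ t in Icc y (y + l), (‖V t‖₊ : ℝ≥0∞) :=
        setLIntegral_congr_fun_ae measurableSet_Icc (Filter.Eventually.of_forall
          fun t ht => by rw [hVeq t (hIsub ht)])
      rwa [eU, eV] at h
    have hvol : volume (Icc y (y + l)) = ENNReal.ofReal l := by
      rw [Real.volume_Icc, add_sub_cancel_left]
    have hJu : (∫⁻ t in Icc y (y + l), (‖U t‖₊ : ℝ≥0∞)) ^ p
        ≤ ENNReal.ofReal l ^ (p - 1) * ∫⁻ t in Icc y (y + l), Gu t := by
      have h := holder_window (s := Icc y (y + l)) measurableSet_Icc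
        ((hUmeas.nnnorm.coe_nnreal_ennreal).aemeasurable) hp
      rwa [hvol] at h
    have hJv : (∫⁻ t in Icc y (y + l), (‖V t‖₊ : ℝ≥0∞)) ^ p
        ≤ ENNReal.ofReal l ^ (p - 1) * ∫⁻ t in Icc y (y + l), Gv t := by
      have h := holder_window (s := Icc y (y + l)) measurableSet_Icc
        ((hVmeas.nnnorm.coe_nnreal_ennreal).aemeasurable) hp
      rwa [hvol] at h
    have h1 : (‖u' y‖₊ : ℝ≥0∞) ^ p ≤ ENNReal.ofReal (2 ^ p) *
        ((ENNReal.ofReal (18 / l ^ 2) * ∫⁻ t in Icc y (y + l), (‖U t‖₊ : ℝ≥0∞)) ^ p +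
         (3 * ∫⁻ t in Icc y (y + l), (‖V t‖₊ : ℝ≥0∞)) ^ p) :=
      le_trans (ENNReal.rpow_le_rpow h0 hp0.le) (two_rpow_helper hp.le)
    have h2 : (‖u' y‖₊ : ℝ≥0∞) ^ p ≤ ENNReal.ofReal (2 ^ p) *
        ((ENNReal.ofReal (18 / l ^ 2) ^ p * (ENNReal.ofReal l ^ (p - 1) *
            ∫⁻ t in Icc y (y + l), Gu t)) +
         ((3:ℝ≥0∞) ^ p * (ENNReal.ofReal l ^ (p - 1) * ∫⁻ t in Icc y (y + l), Gv t))) := by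
      refine le_trans h1 (mul_le_mul_right (add_le_add ?_ ?_) _)
      · rw [ENNReal.mul_rpow_of_nonneg _ _ hp0.le]
        exact mul_le_mul_right hJu _
      · rw [ENNReal.mul_rpow_of_nonneg _ _ hp0.le]
        exact mul_le_mul_right hJv _
    have e18 : ENNReal.ofReal (18 / l ^ 2) ^ p = ENNReal.ofReal ((18 / l ^ 2) ^ p) :=
      ENNReal.ofReal_rpow_of_pos (by positivity)
    have e3 : (3:ℝ≥0∞) ^ p = ENNReal.ofReal ((3:ℝ) ^ p) := by
      rw [show (3:ℝ≥0∞) = ENNReal.ofReal 3 by norm_num, ENNReal.ofReal_rpow_of_pos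
        (by norm_num)]
    have el : ENNReal.ofReal l ^ (p - 1) = ENNReal.ofReal (l ^ (p - 1)) :=
      ENNReal.ofReal_rpow_of_pos hl0
    calc ENNReal.ofReal (y ^ (m + p * (β/2))) * (‖u' y‖₊ : ℝ≥0∞) ^ p
        ≤ ENNReal.ofReal (y ^ (m + p * (β/2))) * (ENNReal.ofReal (2 ^ p) *
          ((ENNReal.ofReal (18 / l ^ 2) ^ p * (ENNReal.ofReal l ^ (p - 1) *
              ∫⁻ t in Icc y (y + l), Gu t)) +
           ((3:ℝ≥0∞) ^ p * (ENNReal.ofReal l ^ (p - 1) *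
              ∫⁻ t in Icc y (y + l), Gv t)))) := mul_le_mul_right h2 _
      _ = ENNReal.ofReal (y ^ (m + p * (β/2)) * (2 ^ p * ((18 / l ^ 2) ^ p * l ^ (p-1)))) *
            (∫⁻ t in Icc y (y + l), Gu t)
          + ENNReal.ofReal (y ^ (m + p * (β/2)) * (2 ^ p * ((3:ℝ) ^ p * l ^ (p-1)))) *
            (∫⁻ t in Icc y (y + l), Gv t) := by
          rw [e18, e3, el, mul_add]
          have expand : ∀ a b c d : ℝ, 0 ≤ a → 0 ≤ b → 0 ≤ c → 0 ≤ d →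
              ENNReal.ofReal (a * (b * (c * d))) = ENNReal.ofReal a * ENNReal.ofReal b *
                ENNReal.ofReal c * ENNReal.ofReal d := by
            intro a b c d ha hb hc hd
            rw [ENNReal.ofReal_mul ha, ENNReal.ofReal_mul hb, ENNReal.ofReal_mul hc, mul_assoc,
              mul_assoc]
          rw [expand _ _ _ _ (by positivity) (by positivity) (by positivity) (by positivity),
            expand _ _ _ _ (by positivity) (by positivity) (by positivity) (by positivity)]
          ring
      _ = _ := by
          rw [coeff1 hy1 hε hp0, coeff2 hy1 hε hp0]
  -- main integral estimate
  have main : X ≤ ENNReal.ofReal ((36 ^ p * ε ^ (-(p+1))) * 2 ^ (|m - β/2| + |β/2|) * ε) * B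
      + ENNReal.ofReal ((6 ^ p * ε ^ (p-1)) * 2 ^ (|m + (2*p-1) * (β/2)| + |β/2|) * ε) * A := by
    have step1 : X ≤ ∫⁻ y in Ioi 1,
        (ENNReal.ofReal ((36 ^ p * ε ^ (-(p+1))) * y ^ (m - β/2)) *
          (∫⁻ t in Icc y (y + ε * y ^ (β/2)), Gu t)
        + ENNReal.ofReal ((6 ^ p * ε ^ (p-1)) * y ^ (m + (2*p-1) * (β/2))) *
          (∫⁻ t in Icc y (y + ε * y ^ (β/2)), Gv t)) :=
      setLIntegral_mono' measurableSet_Ioi key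
    have step2 : (∫⁻ y in Ioi 1,
        (ENNReal.ofReal ((36 ^ p * ε ^ (-(p+1))) * y ^ (m - β/2)) *
          (∫⁻ t in Icc y (y + ε * y ^ (β/2)), Gu t)
        + ENNReal.ofReal ((6 ^ p * ε ^ (p-1)) * y ^ (m + (2*p-1) * (β/2))) *
          (∫⁻ t in Icc y (y + ε * y ^ (β/2)), Gv t)))
        = (∫⁻ y in Ioi 1, ENNReal.ofReal ((36 ^ p * ε ^ (-(p+1))) * y ^ (m - β/2)) *
            (∫⁻ t in Icc y (y + ε * y ^ (β/2)), Gu t))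
        + ∫⁻ y in Ioi 1, ENNReal.ofReal ((6 ^ p * ε ^ (p-1)) * y ^ (m + (2*p-1) * (β/2))) *
            (∫⁻ t in Icc y (y + ε * y ^ (β/2)), Gv t) := by
      apply lintegral_add_left
      exact (by fun_prop : Measurable fun y : ℝ =>
        ENNReal.ofReal ((36 ^ p * ε ^ (-(p+1))) * y ^ (m - β/2))).mul (meas_window hGum)
    have sb1 := swap_bound hβ hε hε2 hGum hGu'
      (show (0:ℝ) ≤ 36 ^ p * ε ^ (-(p+1)) by positivity) (r := m - β/2)
    have sb2 := swap_bound hβ hε hε2 hGvm hGv'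
      (show (0:ℝ) ≤ 6 ^ p * ε ^ (p-1) by positivity) (r := m + (2*p-1) * (β/2))
    rw [show m - β/2 + β/2 = m by ring] at sb1
    rw [show m + (2*p-1) * (β/2) + β/2 = m + p * β by ring] at sb2
    calc X ≤ _ := step1
      _ = _ := step2
      _ ≤ _ := add_le_add sb1 sb2
  -- coefficient simplification
  have eps1 : ε ^ (-(p+1)) * ε = ε ^ (-p) := by
    have h := (Real.rpow_add hε (-(p+1)) 1).symm
    rw [Real.rpow_one] at h
    rw [h]
    congr 1
    ring
  have eps2 : ε ^ (p-1) * ε = ε ^ p := by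
    have h := (Real.rpow_add hε (p-1) 1).symm
    rw [Real.rpow_one] at h
    rw [h]
    congr 1
    ring
  have co1 : (36 ^ p * ε ^ (-(p+1))) * 2 ^ (|m - β/2| + |β/2|) * ε = 36 ^ p * K1 * ε ^ (-p) := by
    rw [hK1, ← eps1]; ring
  have co2 : (6 ^ p * ε ^ (p-1)) * 2 ^ (|m + (2*p-1) * (β/2)| + |β/2|) * ε
      = 6 ^ p * K2 * ε ^ p := by
    rw [hK2, ← eps2]; ring
  rw [co1, co2] at main
  have main2 : X ≤ ENNReal.ofReal (D * ε ^ p) * A + ENNReal.ofReal (D * ε ^ (-p)) * B := by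
    have b1 : (36:ℝ) ^ p * K1 ≤ D := by
      rw [hD]; nlinarith [Real.rpow_pos_of_pos (show (0:ℝ) < 6 by norm_num) p, hK20]
    have b2 : (6:ℝ) ^ p * K2 ≤ D := by
      rw [hD]; nlinarith [Real.rpow_pos_of_pos (show (0:ℝ) < 36 by norm_num) p, hK10]
    have m1 : ENNReal.ofReal (36 ^ p * K1 * ε ^ (-p)) ≤ ENNReal.ofReal (D * ε ^ (-p)) :=
      ENNReal.ofReal_le_ofReal (mul_le_mul_of_nonneg_right b1 (Real.rpow_nonneg hε.le _))
    have m2 : ENNReal.ofReal (6 ^ p * K2 * ε ^ p) ≤ ENNReal.ofReal (D * ε ^ p) :=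
      ENNReal.ofReal_le_ofReal (mul_le_mul_of_nonneg_right b2 (Real.rpow_nonneg hε.le _))
    calc X ≤ _ := main
      _ ≤ ENNReal.ofReal (D * ε ^ (-p)) * B + ENNReal.ofReal (D * ε ^ p) * A :=
        add_le_add (mul_le_mul_left m1 _) (mul_le_mul_left m2 _)
      _ = _ := add_comm _ _
  -- conclude
  have hp1p : (0:ℝ) ≤ 1/p := by positivity
  have hp1p' : 1/p ≤ 1 := by
    rw [div_le_one hp0]; linarith
  have split : (ENNReal.ofReal (D * ε ^ p) * A + ENNReal.ofReal (D * ε ^ (-p)) * B) ^ (1/p)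
      ≤ (ENNReal.ofReal (D * ε ^ p) * A) ^ (1/p) +
        (ENNReal.ofReal (D * ε ^ (-p)) * B) ^ (1/p) :=
    ENNReal.rpow_add_le_add_rpow _ _ hp1p hp1p'
  have t1 : (ENNReal.ofReal (D * ε ^ p) * A) ^ (1/p)
      = ENNReal.ofReal (D ^ (1/p)) * (ENNReal.ofReal ε * A ^ (1/p)) := by
    rw [ENNReal.mul_rpow_of_nonneg _ _ hp1p, ENNReal.ofReal_rpow_of_pos (by positivity)]
    rw [show (D * ε ^ p) ^ (1/p) = D ^ (1/p) * ε from ?_, ENNReal.ofReal_mul (by positivity),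
      mul_assoc]
    rw [Real.mul_rpow hD0.le (Real.rpow_nonneg hε.le _), ← Real.rpow_mul hε.le,
      mul_one_div_cancel (ne_of_gt hp0), Real.rpow_one]
  have t2 : (ENNReal.ofReal (D * ε ^ (-p)) * B) ^ (1/p)
      = ENNReal.ofReal (D ^ (1/p)) * (ENNReal.ofReal (1/ε) * B ^ (1/p)) := by
    rw [ENNReal.mul_rpow_of_nonneg _ _ hp1p, ENNReal.ofReal_rpow_of_pos (by positivity)]
    rw [show (D * ε ^ (-p)) ^ (1/p) = D ^ (1/p) * (1/ε) from ?_,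
      ENNReal.ofReal_mul (by positivity), mul_assoc]
    rw [Real.mul_rpow hD0.le (Real.rpow_nonneg hε.le _), ← Real.rpow_mul hε.le,
      show -p * (1/p) = -1 by field_simp, Real.rpow_neg_one, one_div]
    rw [one_div]
  calc eLpNorm (fun y => y ^ (β / 2) * u' y) P (wm1 m) = X ^ (1/p) := hid1
    _ ≤ (ENNReal.ofReal (D * ε ^ p) * A + ENNReal.ofReal (D * ε ^ (-p)) * B) ^ (1/p) :=
      ENNReal.rpow_le_rpow main2 hp1p
    _ ≤ (ENNReal.ofReal (D * ε ^ p) * A) ^ (1/p) +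
        (ENNReal.ofReal (D * ε ^ (-p)) * B) ^ (1/p) := split
    _ = ENNReal.ofReal (D ^ (1/p)) * (ENNReal.ofReal ε * A ^ (1/p)) +
        ENNReal.ofReal (D ^ (1/p)) * (ENNReal.ofReal (1/ε) * B ^ (1/p)) := by rw [t1, t2]
    _ = ENNReal.ofReal (D ^ (1/p)) * (ENNReal.ofReal ε * A ^ (1/p) +
        ENNReal.ofReal (1/ε) * B ^ (1/p)) := by rw [mul_add]
    _ = _ := by rw [hid2, hid3]

end main
end

section
/- Let $p > 1$, $m \in \mathbb{R}$, $\alpha_2 < 2$, $c > 1$ with $\frac{m+1}{p} < c + 1 - \alpha_2$. Let $u \in W^{2,p}_{loc}((0,\infty))$ with $y^{\alpha_2}(u'' + c u'/y) \in L^p((0,\infty); y^m dy)$, and suppose $\frac{m+1}{p} \neq 2 - \alpha_2$. Then $\lim_{y \to 0^+} y^{c-1} u(y) = 0$ if and only if $\lim_{y \to 0^+} y^c u'(y) = 0$. Moreover, when the limit $v_0 = \lim_{y\to 0^+} y^c u'(y)$ exists (it always does under these hypotheses), one has $\lim_{y \to 0^+} y^{c-1} u(y) = \frac{v_0}{1-c}$.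 -/
open MeasureTheory Filter
open scoped ENNReal Topology

lemma wm_restrict (m : ℝ) {t : ℝ} :
    (wm m).restrict (Set.Ioc 0 t) =
      (volume.restrict (Set.Ioc 0 t)).withDensity fun y => ENNReal.ofReal (y ^ m) := by
  rw [wm, restrict_withDensity measurableSet_Ioc, Measure.restrict_restrict measurableSet_Ioc,
    Set.inter_eq_left.2 Set.Ioc_subset_Ioi_self]

lemma vol_ac (m : ℝ) : volume.restrict (Set.Ioi (0:ℝ)) ≪ wm m := by
  refine withDensity_absolutelyContinuous' (by fun_prop) ?_
  filter_upwards [ae_restrict_mem measurableSet_Ioi] with x hx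
  simp [ENNReal.ofReal_eq_zero, not_le, Real.rpow_pos_of_pos hx]

lemma holder_aux (p q m a δ : ℝ) (hp : 1 < p) (hpq : p.HolderConjugate q)
    (hδ : 0 < δ) (hδeq : a - m / p + 1 / q = δ)
    (f : ℝ → ℝ) (hf : MemLp f (ENNReal.ofReal p) (wm m)) :
    ∃ C : ℝ, 0 ≤ C ∧ ∀ t : ℝ, 0 < t →
      IntegrableOn (fun s => s ^ a * f s) (Set.Ioc 0 t) ∧
      ∫ s in Set.Ioc 0 t, |s ^ a * f s| ≤ C * t ^ δ := by
  have hp0 : (0:ℝ) < p := hpq.pos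
  have hq0 : (0:ℝ) < q := hpq.symm.pos
  set β : ℝ := a - m / p with hβdef
  set N : ℝ≥0∞ := ∫⁻ y, (‖f y‖₊ : ℝ≥0∞) ^ p ∂(wm m) with hNdef
  have hN : N < ∞ := by
    have := lintegral_rpow_enorm_lt_top_of_eLpNorm_lt_top
      (f := f) (μ := wm m) (p := ENNReal.ofReal p)
      (by simp [ENNReal.ofReal_eq_zero, not_le, hp0]) (by simp) hf.2
    rwa [ENNReal.toReal_ofReal hp0.le] at this
  have hNp : N ^ (1/p) < ∞ := ENNReal.rpow_lt_top_of_nonneg (by positivity) hN.ne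
  have hqδ : 0 < q * δ := by positivity
  have hβq : β * q + 1 = q * δ := by
    have h1 : 1/p + 1/q = 1 := by
      have := hpq.inv_add_inv_eq_one; rw [one_div, one_div]; linarith
    have : β = δ - 1/q := by linarith
    rw [this]; field_simp; ring
  have hβq1 : (-1:ℝ) < β * q := by linarith
  refine ⟨(q * δ)⁻¹ ^ (1/q) * (N ^ (1/p)).toReal, by positivity, fun t ht => ?_⟩
  -- measurability
  have hfm : AEStronglyMeasurable f (volume.restrict (Set.Ioc 0 t)) := by
    have h0 : AEStronglyMeasurable f (volume.restrict (Set.Ioi (0:ℝ))) :=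
      hf.1.mono_ac (vol_ac m)
    have := h0.restrict (s := Set.Ioc 0 t)
    rwa [Measure.restrict_restrict measurableSet_Ioc,
      Set.inter_eq_left.2 Set.Ioc_subset_Ioi_self] at this
  have hgm : AEStronglyMeasurable (fun s => s ^ a * f s) (volume.restrict (Set.Ioc 0 t)) :=
    ((measurable_id.pow measurable_const).aestronglyMeasurable).mul hfm
  -- pointwise splitting
  have hsplit : ∀ᵐ s ∂(volume.restrict (Set.Ioc (0:ℝ) t)),
      (‖s ^ a * f s‖₊ : ℝ≥0∞)
        = ENNReal.ofReal (s ^ β) * ENNReal.ofReal (s ^ (m/p) * |f s|) := by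
    filter_upwards [ae_restrict_mem measurableSet_Ioc] with s hs
    have hs0 : (0:ℝ) < s := hs.1
    rw [← enorm_eq_nnnorm, Real.enorm_eq_ofReal_abs, ← ENNReal.ofReal_mul (by positivity)]
    congr 1
    rw [abs_mul, abs_of_nonneg (Real.rpow_nonneg hs0.le _)]
    rw [← mul_assoc, ← Real.rpow_add hs0]
    congr 2
    ring
  have key : (∫⁻ s in Set.Ioc 0 t, (‖s ^ a * f s‖₊ : ℝ≥0∞))
      ≤ ENNReal.ofReal ((q * δ)⁻¹ ^ (1/q) * t ^ δ) * N ^ (1/p) := by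
    calc (∫⁻ s in Set.Ioc 0 t, (‖s ^ a * f s‖₊ : ℝ≥0∞))
        = ∫⁻ s in Set.Ioc 0 t,
            ENNReal.ofReal (s ^ β) * ENNReal.ofReal (s ^ (m/p) * |f s|) :=
          lintegral_congr_ae hsplit
      _ ≤ (∫⁻ s in Set.Ioc 0 t, ENNReal.ofReal (s ^ β) ^ q) ^ (1/q) *
            (∫⁻ s in Set.Ioc 0 t, ENNReal.ofReal (s ^ (m/p) * |f s|) ^ p) ^ (1/p) := by
          have := ENNReal.lintegral_mul_le_Lp_mul_Lq (volume.restrict (Set.Ioc (0:ℝ) t))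
            hpq.symm
            (f := fun s => ENNReal.ofReal (s ^ β))
            (g := fun s => ENNReal.ofReal (s ^ (m/p) * |f s|))
            (by fun_prop)
            (ENNReal.measurable_ofReal.comp_aemeasurable
              (((measurable_id.pow measurable_const).aemeasurable).mul
                hfm.norm.aemeasurable))
          simpa using this
      _ ≤ ENNReal.ofReal ((q * δ)⁻¹ ^ (1/q) * t ^ δ) * N ^ (1/p) := by
          gcongr ?_ * ?_
          · -- weight term
            have hW : (∫⁻ s in Set.Ioc 0 t, ENNReal.ofReal (s ^ β) ^ q)
                = ENNReal.ofReal (t ^ (q*δ) / (q*δ)) := by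
              have hcong : ∀ᵐ s ∂(volume.restrict (Set.Ioc (0:ℝ) t)),
                  ENNReal.ofReal (s ^ β) ^ q = ENNReal.ofReal (s ^ (β * q)) := by
                filter_upwards [ae_restrict_mem measurableSet_Ioc] with s hs
                rw [ENNReal.ofReal_rpow_of_nonneg (Real.rpow_nonneg hs.1.le _) hq0.le,
                  ← Real.rpow_mul hs.1.le]
              rw [lintegral_congr_ae hcong]
              have hint : IntegrableOn (fun s : ℝ => s ^ (β * q)) (Set.Ioc 0 t) :=
                (intervalIntegrable_iff_integrableOn_Ioc_of_le ht.le).1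
                  (intervalIntegral.intervalIntegrable_rpow' hβq1)
              rw [← ofReal_integral_eq_lintegral_ofReal hint ?_]
              · congr 1
                rw [← intervalIntegral.integral_of_le ht.le, integral_rpow (Or.inl hβq1)]
                rw [Real.zero_rpow (by linarith : β * q + 1 ≠ 0), hβq]
                ring
              · filter_upwards [ae_restrict_mem measurableSet_Ioc] with s hs
                exact Real.rpow_nonneg hs.1.le _
            rw [hW, ENNReal.ofReal_rpow_of_nonneg (div_nonneg (Real.rpow_nonneg ht.le _) hqδ.le) (by positivity)]
            apply le_of_eq
            congr 1
            have hqq : q * δ * (1/q) = δ := by field_simp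
            rw [Real.div_rpow (Real.rpow_nonneg ht.le _) hqδ.le, ← Real.rpow_mul ht.le,
              hqq, Real.inv_rpow hqδ.le, div_eq_mul_inv, mul_comm]
          · -- f term
            have hcong : ∀ᵐ s ∂(volume.restrict (Set.Ioc (0:ℝ) t)),
                ENNReal.ofReal (s ^ (m/p) * |f s|) ^ p
                  = ENNReal.ofReal (s ^ m) * (‖f s‖₊ : ℝ≥0∞) ^ p := by
              filter_upwards [ae_restrict_mem measurableSet_Ioc] with s hs
              rw [ENNReal.ofReal_rpow_of_nonneg (mul_nonneg (Real.rpow_nonneg hs.1.le _) (abs_nonneg _)) hp0.le,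
                Real.mul_rpow (Real.rpow_nonneg hs.1.le _) (abs_nonneg _),
                ← Real.rpow_mul hs.1.le, div_mul_cancel₀ _ hp0.ne',
                ENNReal.ofReal_mul (Real.rpow_nonneg hs.1.le _),
                ← enorm_eq_nnnorm, Real.enorm_eq_ofReal_abs,
                ENNReal.ofReal_rpow_of_nonneg (abs_nonneg _) hp0.le]
            rw [lintegral_congr_ae hcong]
            gcongr
            calc (∫⁻ s in Set.Ioc 0 t, ENNReal.ofReal (s ^ m) * (‖f s‖₊ : ℝ≥0∞) ^ p)
                ≤ ∫⁻ s in Set.Ioi 0, ENNReal.ofReal (s ^ m) * (‖f s‖₊ : ℝ≥0∞) ^ p :=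
                  lintegral_mono_set Set.Ioc_subset_Ioi_self
              _ = N := by
                  rw [hNdef, wm,
                    lintegral_withDensity_eq_lintegral_mul₀ (by fun_prop)
                      ((hf.1.mono_ac (vol_ac m)).aemeasurable.nnnorm.coe_nnreal_ennreal.pow_const _)]
                  rfl
  have hfin : (∫⁻ s in Set.Ioc 0 t, (‖s ^ a * f s‖₊ : ℝ≥0∞)) < ∞ :=
    lt_of_le_of_lt key (ENNReal.mul_lt_top ENNReal.ofReal_lt_top hNp)
  have hInt : IntegrableOn (fun s => s ^ a * f s) (Set.Ioc 0 t) := ⟨hgm, hfin⟩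
  refine ⟨hInt, ?_⟩
  have habs : ∫ s in Set.Ioc 0 t, |s ^ a * f s|
      = (∫⁻ s in Set.Ioc 0 t, (‖s ^ a * f s‖₊ : ℝ≥0∞)).toReal := by
    simp_rw [← enorm_eq_nnnorm]
    rw [← integral_norm_eq_lintegral_enorm hgm]
    simp [Real.norm_eq_abs, abs_mul]
  rw [habs]
  calc (∫⁻ s in Set.Ioc 0 t, (‖s ^ a * f s‖₊ : ℝ≥0∞)).toReal
      ≤ (ENNReal.ofReal ((q * δ)⁻¹ ^ (1/q) * t ^ δ) * N ^ (1/p)).toReal :=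
        ENNReal.toReal_mono (ENNReal.mul_ne_top ENNReal.ofReal_ne_top hNp.ne) key
    _ = (q * δ)⁻¹ ^ (1/q) * (N ^ (1/p)).toReal * t ^ δ := by
        rw [ENNReal.toReal_mul, ENNReal.toReal_ofReal (by positivity)]
        ring


/-- For `c > 1`, `(m+1)/p < c+1-α₂`, `(m+1)/p ≠ 2-α₂` and
`y^{α₂}(u'' + c u'/y) ∈ L^p_m`: the trace `v₀ = lim_{y→0⁺} y^c u'(y)` exists,
`lim_{y→0⁺} y^{c-1} u(y) = v₀/(1-c)`, and hence `y^{c-1}u → 0` iff `y^c u' → 0`. -/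
theorem stmt16 (p m α₂ c : ℝ) (hp : 1 < p) (hα : α₂ < 2) (hc : 1 < c)
    (h : (m + 1) / p < c + 1 - α₂) (hne : (m + 1) / p ≠ 2 - α₂)
    (u u' u'' : ℝ → ℝ)
    (h1 : ∀ y, 0 < y → HasDerivAt u (u' y) y)
    (h2 : ∀ y, 0 < y → HasDerivAt u' (u'' y) y)
    (hf : MemLp (fun y => y ^ α₂ * (u'' y + c * u' y / y)) (ENNReal.ofReal p) (wm m)) :
    ∃ v₀ : ℝ, Tendsto (fun y => y ^ c * u' y) (𝓝[>] 0) (𝓝 v₀) ∧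
      Tendsto (fun y => y ^ (c - 1) * u y) (𝓝[>] 0) (𝓝 (v₀ / (1 - c))) ∧
      (Tendsto (fun y => y ^ (c - 1) * u y) (𝓝[>] 0) (𝓝 0) ↔
        Tendsto (fun y => y ^ c * u' y) (𝓝[>] 0) (𝓝 0)) := by
  have hp0 : (0:ℝ) < p := lt_trans one_pos hp
  have hc1 : (0:ℝ) < c - 1 := by linarith
  have h1c : (1:ℝ) - c ≠ 0 := by intro hh; rw [sub_eq_zero] at hh; exact (lt_irrefl _ (hh ▸ hc))
  set q : ℝ := p / (p - 1) with hqdef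
  have hpq : p.HolderConjugate q := Real.HolderConjugate.conjExponent hp
  have hq0 : (0:ℝ) < q := hpq.symm.pos
  set δ : ℝ := c + 1 - α₂ - (m + 1) / p with hδdef
  have hδ : 0 < δ := by rw [hδdef]; linarith
  set γ : ℝ := 2 - α₂ - (m + 1) / p with hγdef
  have hδγ : δ = c - 1 + γ := by rw [hδdef, hγdef]; ring
  have hγ0 : γ ≠ 0 := by
    intro hg; apply hne; rw [hγdef] at hg; linarith
  set f : ℝ → ℝ := fun y => y ^ α₂ * (u'' y + c * u' y / y) with hfdef
  have h1pq : 1 / p + 1 / q = 1 := by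
    have := hpq.inv_add_inv_eq_one; rw [one_div, one_div]; linarith
  have hδeq : (c - α₂) - m / p + 1 / q = δ := by
    have h1q : 1 / q = 1 - 1 / p := by linarith
    rw [hδdef, h1q]; ring
  obtain ⟨C, hC0, hB⟩ := holder_aux p q m (c - α₂) δ hp hpq hδ hδeq f hf
  set g : ℝ → ℝ := fun s => s ^ (c - α₂) * f s with hgdef
  set v : ℝ → ℝ := fun y => y ^ c * u' y with hvdef
  -- derivative of v
  have hv' : ∀ s : ℝ, 0 < s → HasDerivAt v (g s) s := by
    intro s hs
    have hds : HasDerivAt (fun y : ℝ => y ^ c) (c * s ^ (c - 1)) s :=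
      (Real.hasStrictDerivAt_rpow_const_of_ne (ne_of_gt hs) c).hasDerivAt
    have H := hds.mul (h2 s hs)
    have hval : g s = c * s ^ (c - 1) * u' s + s ^ c * u'' s := by
      show s ^ (c - α₂) * (s ^ α₂ * (u'' s + c * u' s / s)) = _
      rw [← mul_assoc, ← Real.rpow_add hs, sub_add_cancel,
        Real.rpow_sub hs, Real.rpow_one]
      field_simp
      ring
    rw [hval]
    exact H
  have hIg0 : ∀ s : ℝ, 0 < s → IntervalIntegrable g volume 0 s := fun s hs =>
    (intervalIntegrable_iff_integrableOn_Ioc_of_le hs.le).2 (hB s hs).1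
  have hIg : ∀ s : ℝ, 0 < s → s ≤ 1 → IntervalIntegrable g volume s 1 := fun s hs hs1 =>
    (intervalIntegrable_iff_integrableOn_Ioc_of_le hs1).2
      (((hB 1 one_pos).1).mono_set (Set.Ioc_subset_Ioc_left hs.le))
  have hFTC : ∀ s : ℝ, 0 < s → s ≤ 1 → v 1 - v s = ∫ x in s..1, g x := by
    intro s hs hs1
    refine (intervalIntegral.integral_eq_sub_of_hasDerivAt (fun x hx => hv' x ?_)
      (hIg s hs hs1)).symm
    exact lt_of_lt_of_le (lt_min hs one_pos) hx.1
  set v₀ : ℝ := v 1 - ∫ x in (0:ℝ)..1, g x with hv₀def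
  have hvsub : ∀ s : ℝ, 0 < s → s ≤ 1 → v s - v₀ = ∫ x in (0:ℝ)..s, g x := by
    intro s hs hs1
    have hadd := intervalIntegral.integral_add_adjacent_intervals (hIg0 s hs) (hIg s hs hs1)
    have hF := hFTC s hs hs1
    rw [hv₀def]
    linarith
  have hvb : ∀ s : ℝ, 0 < s → s ≤ 1 → |v s - v₀| ≤ C * s ^ δ := by
    intro s hs hs1
    rw [hvsub s hs hs1, intervalIntegral.integral_of_le hs.le]
    calc |∫ x in Set.Ioc 0 s, g x| ≤ ∫ x in Set.Ioc 0 s, |g x| := by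
          simpa [Real.norm_eq_abs] using
            norm_integral_le_integral_norm (f := g) (μ := volume.restrict (Set.Ioc 0 s))
      _ ≤ C * s ^ δ := (hB s hs).2
  have hIoc : Set.Ioc (0:ℝ) 1 ∈ 𝓝[>] (0:ℝ) :=
    Ioc_mem_nhdsGT_of_mem (Set.mem_Ico.2 ⟨le_refl 0, one_pos⟩)
  have hrp0 : ∀ e : ℝ, 0 < e → Tendsto (fun s : ℝ => s ^ e) (𝓝[>] 0) (𝓝 0) := by
    intro e he
    have : Tendsto (fun s : ℝ => s ^ e) (𝓝 0) (𝓝 ((0:ℝ) ^ e)) :=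
      (Real.continuousAt_rpow_const 0 e (Or.inr he.le)).tendsto
    rw [Real.zero_rpow he.ne'] at this
    exact this.mono_left nhdsWithin_le_nhds
  have hvt : Tendsto v (𝓝[>] 0) (𝓝 v₀) := by
    have hsq : Tendsto (fun s => v s - v₀) (𝓝[>] 0) (𝓝 0) := by
      apply squeeze_zero_norm' ?_ (by simpa using ((hrp0 δ hδ).const_mul C))
      filter_upwards [hIoc] with s hs
      simpa [Real.norm_eq_abs] using hvb s hs.1 hs.2
    have h2' := hsq.add (tendsto_const_nhds : Tendsto (fun _ : ℝ => v₀) (𝓝[>] (0:ℝ)) (𝓝 v₀))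
    simpa using h2'
  -- continuity facts
  have hu'cont : ContinuousOn u' (Set.Ioi 0) := fun y hy =>
    ((h2 y hy).differentiableAt.continuousAt).continuousWithinAt
  have hrc : ∀ e : ℝ, ContinuousOn (fun s : ℝ => s ^ e) (Set.Ioi 0) := fun e y hy =>
    (Real.continuousAt_rpow_const y e (Or.inl (ne_of_gt hy))).continuousWithinAt
  have hvcont : ContinuousOn v (Set.Ioi 0) := (hrc c).mul hu'cont
  set R : ℝ → ℝ := fun y => ∫ s in y..1, s ^ (-c) * (v s - v₀) with hRdef
  have hGc : ContinuousOn (fun s : ℝ => s ^ (-c) * (v s - v₀)) (Set.Ioi 0) :=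
    (hrc (-c)).mul (hvcont.sub continuousOn_const)
  have hsubI : ∀ y : ℝ, 0 < y → y ≤ 1 → Set.uIcc y 1 ⊆ Set.Ioi 0 := by
    intro y hy hy1
    rw [Set.uIcc_of_le hy1]
    exact fun x hx => lt_of_lt_of_le hy hx.1
  have hkey : ∀ y : ℝ, 0 < y → y ≤ 1 →
      y ^ (c - 1) * u y
        = y ^ (c - 1) * u 1 - v₀ * (y ^ (c - 1) - 1) / (1 - c) - y ^ (c - 1) * R y := by
    intro y hy hy1
    have hFTCu : u 1 - u y = ∫ s in y..1, u' s :=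
      (intervalIntegral.integral_eq_sub_of_hasDerivAt
        (fun x hx => h1 x (hsubI y hy hy1 hx))
        ((hu'cont.mono (hsubI y hy hy1)).intervalIntegrable)).symm
    have hcongr : ∫ s in y..1, u' s
        = ∫ s in y..1, (s ^ (-c) * v₀ + s ^ (-c) * (v s - v₀)) := by
      apply intervalIntegral.integral_congr
      intro s hs
      have hs0 : 0 < s := hsubI y hy hy1 hs
      have hvv : s ^ (-c) * v s = u' s := by
        show s ^ (-c) * (s ^ c * u' s) = u' s
        rw [← mul_assoc, ← Real.rpow_add hs0, neg_add_cancel, Real.rpow_zero, one_mul]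
      simp only []
      rw [← hvv]; ring
    have hi1 : IntervalIntegrable (fun s : ℝ => s ^ (-c) * v₀) volume y 1 :=
      (((hrc (-c)).mul continuousOn_const).mono (hsubI y hy hy1)).intervalIntegrable
    have hi2 : IntervalIntegrable (fun s : ℝ => s ^ (-c) * (v s - v₀)) volume y 1 :=
      (hGc.mono (hsubI y hy hy1)).intervalIntegrable
    have hsplit2 : ∫ s in y..1, (s ^ (-c) * v₀ + s ^ (-c) * (v s - v₀))
        = (∫ s in y..1, s ^ (-c)) * v₀ + R y := by
      rw [intervalIntegral.integral_add hi1 hi2, intervalIntegral.integral_mul_const]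
    have hpow : (∫ s in y..1, s ^ (-c)) = (1 - y ^ (1 - c)) / (1 - c) := by
      rw [integral_rpow (Or.inr ⟨by intro hh; rw [neg_eq_iff_eq_neg] at hh; linarith,
        fun hx => lt_irrefl 0 (Set.mem_Ioi.1 (hsubI y hy hy1 hx))⟩)]
      rw [Real.one_rpow]
      congr 1 <;> ring_nf
    have hfin : u 1 - u y = (1 - y ^ (1 - c)) / (1 - c) * v₀ + R y := by
      rw [hFTCu, hcongr, hsplit2, hpow]
    have hyc : y ^ (c - 1) * y ^ (1 - c) = 1 := by
      rw [← Real.rpow_add hy]; norm_num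
    have hfin' : (u 1 - u y) * (1 - c) = (1 - y ^ (1 - c)) * v₀ + R y * (1 - c) := by
      field_simp at hfin
      linarith [hfin]
    have key' : y ^ (c - 1) * u y * (1 - c)
        = y ^ (c - 1) * u 1 * (1 - c) - v₀ * (y ^ (c - 1) - 1) - y ^ (c - 1) * R y * (1 - c) := by
      linear_combination (-(y ^ (c - 1))) * hfin' + v₀ * hyc
    have goalmul : (y ^ (c - 1) * u 1 - v₀ * (y ^ (c - 1) - 1) / (1 - c) - y ^ (c - 1) * R y)
          * (1 - c)
        = y ^ (c - 1) * u 1 * (1 - c) - v₀ * (y ^ (c - 1) - 1) - y ^ (c - 1) * R y * (1 - c) := by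
      field_simp
    exact mul_right_cancel₀ h1c (key'.trans goalmul.symm)
  have hRb : ∀ y : ℝ, 0 < y → y ≤ 1 →
      |y ^ (c - 1) * R y| ≤ |C / γ| * |y ^ (c - 1) - y ^ δ| := by
    intro y hy hy1
    have hsub := hsubI y hy hy1
    have hbnd : ‖R y‖ ≤ |∫ s in y..1, C * s ^ (γ - 1)| := by
      apply intervalIntegral.norm_integral_le_abs_of_norm_le
      · filter_upwards [ae_restrict_mem measurableSet_uIoc] with s hs
        have hs' : s ∈ Set.Ioc y 1 := by rwa [Set.uIoc_of_le hy1] at hs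
        have hs0 : 0 < s := lt_trans hy hs'.1
        have hs1' : s ≤ 1 := hs'.2
        have h1' : |v s - v₀| ≤ C * s ^ δ := hvb s hs0 hs1'
        rw [Real.norm_eq_abs, abs_mul, abs_of_nonneg (Real.rpow_nonneg hs0.le _)]
        calc s ^ (-c) * |v s - v₀| ≤ s ^ (-c) * (C * s ^ δ) := by
              apply mul_le_mul_of_nonneg_left h1' (Real.rpow_nonneg hs0.le _)
          _ = C * s ^ (γ - 1) := by
              rw [mul_comm (s ^ (-c)), mul_assoc, ← Real.rpow_add hs0]
              congr 2
              rw [hδγ]; ring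
      · exact (continuousOn_const.mul ((hrc (γ - 1)).mono hsub)).intervalIntegrable
    have hIval : ∫ s in y..1, C * s ^ (γ - 1) = C * ((1 - y ^ γ) / γ) := by
      rw [intervalIntegral.integral_const_mul]
      congr 1
      rw [integral_rpow (Or.inr ⟨by intro hh; apply hγ0; linarith,
        fun hx => lt_irrefl 0 (Set.mem_Ioi.1 (hsub hx))⟩)]
      rw [sub_add_cancel, Real.one_rpow]
    rw [abs_mul, abs_of_nonneg (Real.rpow_nonneg hy.le _)]
    calc y ^ (c - 1) * |R y| ≤ y ^ (c - 1) * |C * ((1 - y ^ γ) / γ)| := by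
          apply mul_le_mul_of_nonneg_left ?_ (Real.rpow_nonneg hy.le _)
          rw [← hIval]
          simpa [Real.norm_eq_abs] using hbnd
      _ = |C / γ| * |y ^ (c - 1) - y ^ δ| := by
          have hthis : y ^ (c - 1) * y ^ γ = y ^ δ := by rw [← Real.rpow_add hy, hδγ]
          have e5 : y ^ (c - 1) * (C * ((1 - y ^ γ) / γ)) = C / γ * (y ^ (c - 1) - y ^ δ) := by
            linear_combination (-(C / γ)) * hthis
          rw [show y ^ (c - 1) * |C * ((1 - y ^ γ) / γ)|
                = |y ^ (c - 1) * (C * ((1 - y ^ γ) / γ))| from by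
              rw [abs_mul (y ^ (c - 1)) (C * ((1 - y ^ γ) / γ)),
                abs_of_nonneg (Real.rpow_nonneg hy.le (c - 1))],
            e5, abs_mul]
  have hT3 : Tendsto (fun y => y ^ (c - 1) * R y) (𝓝[>] 0) (𝓝 0) := by
    have hbd : Tendsto (fun y : ℝ => |C / γ| * |y ^ (c - 1) - y ^ δ|) (𝓝[>] 0) (𝓝 0) := by
      have := (((hrp0 (c-1) hc1).sub (hrp0 δ hδ)).abs.const_mul (|C / γ|))
      simpa using this
    apply squeeze_zero_norm' ?_ hbd
    filter_upwards [hIoc] with y hy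
    simpa [Real.norm_eq_abs, abs_mul] using hRb y hy.1 hy.2
  have t1 : Tendsto (fun y : ℝ => y ^ (c - 1) * u 1) (𝓝[>] 0) (𝓝 (0 * u 1)) :=
    (hrp0 (c - 1) hc1).mul_const (u 1)
  have t2 : Tendsto (fun y : ℝ => v₀ * (y ^ (c - 1) - 1) / (1 - c)) (𝓝[>] 0)
      (𝓝 (v₀ * (0 - 1) / (1 - c))) := (((hrp0 (c - 1) hc1).sub_const 1).const_mul v₀).div_const _
  have hUt : Tendsto (fun y => y ^ (c - 1) * u y) (𝓝[>] 0) (𝓝 (v₀ / (1 - c))) := by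
    have hT := (t1.sub t2).sub hT3
    have hlim : 0 * u 1 - v₀ * (0 - 1) / (1 - c) - 0 = v₀ / (1 - c) := by ring
    rw [hlim] at hT
    apply hT.congr'
    filter_upwards [hIoc] with y hy
    exact (hkey y hy.1 hy.2).symm
  refine ⟨v₀, hvt, hUt, ?_, ?_⟩
  · intro H
    have h0 : v₀ / (1 - c) = 0 := tendsto_nhds_unique hUt H
    have hv0 : v₀ = 0 := by
      rcases div_eq_zero_iff.1 h0 with hh | hh
      · exact hh
      · exact absurd hh h1c
    exact hv0 ▸ hvt
  · intro H
    have hv0 : v₀ = 0 := tendsto_nhds_unique hvt H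
    simpa [hv0] using hUt
end
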